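/- arXiv:1708.01321 — 2 statements merged into one kernel-verified Lean document; each statement's English description precedes it below -/
import Mathlib

section
/- Let S = R ∪ B be a finite bicolored point set in general position in the plane such that R and B are linearly separable. If there exist a point r ∈ R, a point b ∈ B, an edge e of the convex hull of R, and an edge e' of the convex hull of B such that the relative interiors of e and e' both intersect the relative interior of the segment rb, then condition C1 or condition C2 holds. -/
noncomputable section

/-- A set of points in the plane (modeled as `ℂ`) is in general position if
no three of its (distinct) points are collinear. -/
def GenPos (S : Set ℂ) : Prop :=
  ∀ p ∈ S, ∀ q ∈ S, ∀ r ∈ S, p ≠ q → p ≠ r → q ≠ r → ¬ Collinear ℝ ({p, q, r} : Set ℂ)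

/-- The boundary of a quadrilateral with vertices `a, b, c, d` in cyclic order. -/
def QuadBdry (a b c d : ℂ) : Set ℂ :=
  segment ℝ a b ∪ segment ℝ b c ∪ segment ℝ c d ∪ segment ℝ d a

/-- The quadrilateral with vertices `a, b, c, d` in cyclic order is simple:
vertices are pairwise distinct, consecutive edges meet exactly at their common
vertex, and opposite edges are disjoint. -/
def IsSimpleQuad (a b c d : ℂ) : Prop :=
  List.Pairwise (· ≠ ·) [a, b, c, d] ∧
  segment ℝ a b ∩ segment ℝ b c = {b} ∧
  segment ℝ b c ∩ segment ℝ c d = {c} ∧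
  segment ℝ c d ∩ segment ℝ d a = {d} ∧
  segment ℝ d a ∩ segment ℝ a b = {a} ∧
  segment ℝ a b ∩ segment ℝ c d = ∅ ∧
  segment ℝ b c ∩ segment ℝ d a = ∅

/-- The interior of a simple quadrilateral: the union of the bounded connected
components of the complement of its boundary. -/
def QuadInterior (a b c d : ℂ) : Set ℂ :=
  {x | x ∉ QuadBdry a b c d ∧
    Bornology.IsBounded (connectedComponentIn (QuadBdry a b c d)ᶜ x)}

/-- The (not necessarily convex) quadrilateral with vertices `a, b, c, d`
in cyclic order is a balanced 4-hole of the bicolored set `R ∪ B`: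
it is simple, its vertices belong to `R ∪ B` with exactly two of them red and
two blue, and its open interior contains no point of `R ∪ B`. -/
def IsBalanced4Hole (R B : Finset ℂ) (a b c d : ℂ) : Prop :=
  IsSimpleQuad a b c d ∧
  ({a, b, c, d} : Set ℂ) ⊆ (↑R ∪ ↑B : Set ℂ) ∧
  (({a, b, c, d} : Set ℂ) ∩ ↑R).ncard = 2 ∧
  (({a, b, c, d} : Set ℂ) ∩ ↑B).ncard = 2 ∧
  ∀ x ∈ (↑R ∪ ↑B : Set ℂ), x ∉ QuadInterior a b c d

/-- The set of boundaries of balanced 4-holes of `R ∪ B`; two balanced 4-holes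
are distinct iff they have distinct boundaries (so this set counts them). -/
def balanced4HoleBdries (R B : Finset ℂ) : Set (Set ℂ) :=
  {Q | ∃ a b c d : ℂ, IsBalanced4Hole R B a b c d ∧ Q = QuadBdry a b c d}

/-- `p q` is an edge of the convex hull of `S`: both endpoints belong to `S`
and some nonzero linear functional is maximized on `S` exactly along it. -/
def IsHullEdge (S : Set ℂ) (p q : ℂ) : Prop :=
  p ∈ S ∧ q ∈ S ∧ p ≠ q ∧
  ∃ f : ℂ →ₗ[ℝ] ℝ, f ≠ 0 ∧ f p = f q ∧ ∀ s ∈ S, f s ≤ f p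

/-- The counter-clockwise angle (in `(0, 2π]`) from the ray `p → q` to the ray
`p → x`. -/
def ccwAngle (p q x : ℂ) : ℝ :=
  if Complex.arg ((x - p) / (q - p)) ≤ 0 then
    Complex.arg ((x - p) / (q - p)) + 2 * Real.pi
  else Complex.arg ((x - p) / (q - p))

/-- `t` is the first point of `S` reached when rotating the ray `p → q`
counter-clockwise around `p`. -/
def IsFirstCCW (S : Set ℂ) (p q t : ℂ) : Prop :=
  t ∈ S ∧ t ≠ p ∧ t ≠ q ∧
  ∀ s ∈ S, s ≠ p → s ≠ q → s ≠ t → ccwAngle p q t < ccwAngle p q s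

/-- `t` is the first point of `S` reached when rotating the ray `p → q`
clockwise around `p`. -/
def IsFirstCW (S : Set ℂ) (p q t : ℂ) : Prop :=
  t ∈ S ∧ t ≠ p ∧ t ≠ q ∧
  ∀ s ∈ S, s ≠ p → s ≠ q → s ≠ t → ccwAngle p q s < ccwAngle p q t

/-- `t ∈ T(p,q)`: `t` is one of the (at most four) first points of `S = R ∪ B`
reached by the four rotations of the rays `p → q` around `p` and `q → p`
around `q`, clockwise and counter-clockwise. -/
def InT (R B : Finset ℂ) (p q t : ℂ) : Prop :=
  IsFirstCCW (↑R ∪ ↑B : Set ℂ) p q t ∨ IsFirstCW (↑R ∪ ↑B : Set ℂ) p q t ∨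
  IsFirstCCW (↑R ∪ ↑B : Set ℂ) q p t ∨ IsFirstCW (↑R ∪ ↑B : Set ℂ) q p t

/-- The bichromatic segment `p q` (`p` red, `q` blue) is green: it is an edge
or a diagonal of some balanced 4-hole, i.e. both `p` and `q` are vertices of
some balanced 4-hole. -/
def IsGreenEdge (R B : Finset ℂ) (p q : ℂ) : Prop :=
  p ∈ R ∧ q ∈ B ∧
  ∃ a b c d : ℂ, IsBalanced4Hole R B a b c d ∧
    p ∈ ({a, b, c, d} : Set ℂ) ∧ q ∈ ({a, b, c, d} : Set ℂ)

/-- The bichromatic segment `p q` is black: it is not green and is an edge of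
the convex hull of `R ∪ B`. -/
def IsBlackEdge (R B : Finset ℂ) (p q : ℂ) : Prop :=
  p ∈ R ∧ q ∈ B ∧ ¬ IsGreenEdge R B p q ∧ IsHullEdge (↑R ∪ ↑B : Set ℂ) p q

/-- The bichromatic segment `p q` is red: it is neither green nor black and all
points of `T(p,q)` are red. -/
def IsRedEdge (R B : Finset ℂ) (p q : ℂ) : Prop :=
  p ∈ R ∧ q ∈ B ∧ ¬ IsGreenEdge R B p q ∧ ¬ IsHullEdge (↑R ∪ ↑B : Set ℂ) p q ∧
  ∀ t : ℂ, InT R B p q t → t ∈ R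

/-- The bichromatic segment `p q` is blue: it is neither green nor black and
all points of `T(p,q)` are blue. -/
def IsBlueEdge (R B : Finset ℂ) (p q : ℂ) : Prop :=
  p ∈ R ∧ q ∈ B ∧ ¬ IsGreenEdge R B p q ∧ ¬ IsHullEdge (↑R ∪ ↑B : Set ℂ) p q ∧
  ∀ t : ℂ, InT R B p q t → t ∈ B

/-- `R` and `B` are linearly separable: some line has all of `R` strictly on
one side and all of `B` strictly on the other side. -/
def LinSep (R B : Finset ℂ) : Prop :=
  ∃ (f : ℂ →ₗ[ℝ] ℝ) (c : ℝ), (∀ x ∈ R, f x < c) ∧ (∀ x ∈ B, c < f x)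

/-- A finite point set is in (strictly) convex position. -/
def ConvexPos (P : Set ℂ) : Prop :=
  ∀ x ∈ P, x ∉ convexHull ℝ (P \ {x})

/-- `{a, b, c, d}` is the vertex set of a balanced convex 4-hole of `R ∪ B`:
four pairwise distinct points in convex position, all in `R ∪ B`, exactly two
red and two blue, whose open interior (the interior of their convex hull)
contains no point of `R ∪ B`. -/
def IsBalancedConvex4Hole (R B : Finset ℂ) (a b c d : ℂ) : Prop :=
  List.Pairwise (· ≠ ·) [a, b, c, d] ∧
  ConvexPos ({a, b, c, d} : Set ℂ) ∧
  ({a, b, c, d} : Set ℂ) ⊆ (↑R ∪ ↑B : Set ℂ) ∧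
  (({a, b, c, d} : Set ℂ) ∩ ↑R).ncard = 2 ∧
  (({a, b, c, d} : Set ℂ) ∩ ↑B).ncard = 2 ∧
  ∀ x ∈ (↑R ∪ ↑B : Set ℂ), x ∉ interior (convexHull ℝ ({a, b, c, d} : Set ℂ))

/-- The open wedge `W(a,b,c)`: the open convex region bounded by the rays
`a → b` and `a → c`. -/
def wedge (a b c : ℂ) : Set ℂ :=
  {x | ∃ s t : ℝ, 0 < s ∧ 0 < t ∧ x = a + s • (b - a) + t • (c - a)}

/-- The open triangle `Δ a b c`. -/
def openTriangle (a b c : ℂ) : Set ℂ :=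
  interior (convexHull ℝ ({a, b, c} : Set ℂ))

/-- The edge `u v` of `CH(R)` and the edge `w z` of `CH(B)` see each other:
the union of their vertex sets is the vertex set of a balanced convex 4-hole
whose interior intersects neither `CH(R)` nor `CH(B)`. -/
def SeeEachOther (R B : Finset ℂ) (u v w z : ℂ) : Prop :=
  IsHullEdge (↑R : Set ℂ) u v ∧ IsHullEdge (↑B : Set ℂ) w z ∧
  IsBalancedConvex4Hole R B u v w z ∧
  interior (convexHull ℝ ({u, v, w, z} : Set ℂ)) ∩ convexHull ℝ (↑R : Set ℂ) = ∅ ∧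
  interior (convexHull ℝ ({u, v, w, z} : Set ℂ)) ∩ convexHull ℝ (↑B : Set ℂ) = ∅

/-- Condition C1: some edge of `CH(R)` and some edge of `CH(B)` see each
other. -/
def CondC1 (R B : Finset ℂ) : Prop :=
  ∃ u v w z : ℂ, SeeEachOther R B u v w z

/-- Condition C2: there exist an edge `u v` of `CH(R)` and points `b, z ∈ B`
with `z` in the open triangle `Δ u v b`, no red point in `Δ u v b`, and some
red point in the wedge `W(b,u,v)`; or the same with `R` and `B` swapped. -/
def CondC2 (R B : Finset ℂ) : Prop :=
  (∃ u v : ℂ, IsHullEdge (↑R : Set ℂ) u v ∧ ∃ b ∈ B, ∃ z ∈ B,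
      z ∈ openTriangle u v b ∧ (∀ x ∈ R, x ∉ openTriangle u v b) ∧
      ∃ x ∈ R, (x : ℂ) ∈ wedge b u v) ∨
  (∃ u v : ℂ, IsHullEdge (↑B : Set ℂ) u v ∧ ∃ r ∈ R, ∃ z ∈ R,
      z ∈ openTriangle u v r ∧ (∀ x ∈ B, x ∉ openTriangle u v r) ∧
      ∃ x ∈ B, (x : ℂ) ∈ wedge r u v)

/-- The boundary of the closed polygon with vertices `v 0, …, v (m-1)` in
cyclic order. -/
def PolyBdry (m : ℕ) (v : ℕ → ℂ) : Set ℂ :=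
  ⋃ i ∈ Finset.range m, segment ℝ (v i) (v ((i + 1) % m))

/-- The polygon with vertices `v 0, …, v (m-1)` in cyclic order is simple:
the vertices are distinct, consecutive edges meet exactly at their common
vertex, and non-consecutive edges are disjoint. -/
def IsSimplePoly (m : ℕ) (v : ℕ → ℂ) : Prop :=
  Set.InjOn v {i | i < m} ∧
  ∀ i < m, ∀ j < m, i ≠ j →
    (j = (i + 1) % m →
      segment ℝ (v i) (v ((i + 1) % m)) ∩ segment ℝ (v j) (v ((j + 1) % m)) = {v j}) ∧
    (j ≠ (i + 1) % m → i ≠ (j + 1) % m →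
      segment ℝ (v i) (v ((i + 1) % m)) ∩ segment ℝ (v j) (v ((j + 1) % m)) = ∅)

/-- The interior of a simple polygon: the union of the bounded connected
components of the complement of its boundary. -/
def PolyInterior (m : ℕ) (v : ℕ → ℂ) : Set ℂ :=
  {x | x ∉ PolyBdry m v ∧
    Bornology.IsBounded (connectedComponentIn (PolyBdry m v)ᶜ x)}

open Set in
private lemma stmt12_exists_apply_ne_zero (g : ℂ →ₗ[ℝ] ℝ) (hg : g ≠ 0) : ∃ e : ℂ, g e ≠ 0 := by
  by_contra h
  push_neg at h
  exact hg (by ext x; simp [h x])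

open Set in
private lemma stmt12_line_param (g : ℂ →ₗ[ℝ] ℝ) (hg : g ≠ 0) {u v y : ℂ} (huv : v - u ≠ 0)
    (h1 : g (v - u) = 0) (h2 : g (y - u) = 0) : ∃ t : ℝ, y - u = t • (v - u) := by
  obtain ⟨e, he⟩ := stmt12_exists_apply_ne_zero g hg
  have key : ∀ s t : ℝ, s • (v - u) + t • e = y - u ∨ s • (v - u) + t • e = 0 → t = 0 := by
    intro s t hst
    have h3 : g (s • (v - u) + t • e) = 0 := by
      rcases hst with h | h <;> rw [h] <;> simp [h1, h2]
    rw [map_add, map_smul, map_smul, h1, smul_zero, smul_eq_mul, zero_add] at h3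
    rcases mul_eq_zero.1 h3 with h | h
    · exact h
    · exact absurd h he
  have hli : LinearIndependent ℝ ![v - u, e] := by
    rw [LinearIndependent.pair_iff]
    intro s t hst
    have ht : t = 0 := key s t (Or.inr hst)
    subst ht
    have : s • (v - u) = 0 := by simpa using hst
    rcases smul_eq_zero.1 this with h | h
    · exact ⟨h, rfl⟩
    · exact absurd h huv
  have hspan : Submodule.span ℝ (Set.range ![v - u, e]) = ⊤ :=
    hli.span_eq_top_of_card_eq_finrank (by simp [Complex.finrank_real_complex])
  have hrange : Set.range ![v - u, e] = {v - u, e} := by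
    ext x; simp [Fin.exists_fin_two]; tauto
  have hmem : y - u ∈ Submodule.span ℝ ({v - u, e} : Set ℂ) := by
    rw [← hrange, hspan]; trivial
  obtain ⟨s, t, hst⟩ := Submodule.mem_span_pair.1 hmem
  have ht : t = 0 := key s t (Or.inl hst)
  exact ⟨s, by rw [← hst, ht]; simp⟩

open Set in
private lemma stmt12_tri_basis {a b c : ℂ} (hnc : ¬ Collinear ℝ ({a, b, c} : Set ℂ)) :
    ∃ β : AffineBasis (Fin 3) ℝ ℂ, ⇑β = ![a, b, c] := by
  have hind : AffineIndependent ℝ ![a, b, c] :=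
    affineIndependent_iff_not_collinear_set.2 hnc
  have htot : affineSpan ℝ (Set.range ![a, b, c]) = ⊤ := by
    rw [hind.affineSpan_eq_top_iff_card_eq_finrank_add_one]
    simp [Complex.finrank_real_complex]
  exact ⟨⟨![a, b, c], hind, htot⟩, rfl⟩

open Set in
private lemma stmt12_range_three {a b c : ℂ} :
    Set.range ![a, b, c] = ({a, b, c} : Set ℂ) := by
  ext x; simp [Fin.exists_fin_succ, Fin.exists_fin_two]; tauto

open Set in
private lemma stmt12_mem_interior_triangle {a b c : ℂ}
    (hnc : ¬ Collinear ℝ ({a, b, c} : Set ℂ)) {x : ℂ} :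
    x ∈ interior (convexHull ℝ ({a, b, c} : Set ℂ)) ↔
      ∃ α β γ : ℝ, 0 < α ∧ 0 < β ∧ 0 < γ ∧ α + β + γ = 1 ∧
        x = α • a + β • b + γ • c := by
  obtain ⟨B, hB⟩ := stmt12_tri_basis hnc
  have hrange : Set.range ⇑B = ({a, b, c} : Set ℂ) := by rw [hB]; exact stmt12_range_three
  rw [← hrange, B.interior_convexHull]
  constructor
  · intro hx
    refine ⟨B.coord 0 x, B.coord 1 x, B.coord 2 x, hx 0, hx 1, hx 2, ?_, ?_⟩
    · have h0 := B.sum_coord_apply_eq_one x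
      rw [Fin.sum_univ_three] at h0
      exact h0
    · have h1 := B.affineCombination_coord_eq_self x
      rw [Finset.univ.affineCombination_eq_linear_combination _ _
        (B.sum_coord_apply_eq_one x)] at h1
      rw [Fin.sum_univ_three] at h1
      simp only [hB, Matrix.cons_val_zero, Matrix.cons_val_one, Matrix.head_cons,
        Matrix.cons_val_two, Matrix.tail_cons] at h1
      exact h1.symm
  · rintro ⟨α, β, γ, hα, hβ, hγ, hsum, rfl⟩
    intro i
    have hw : (Finset.univ.sum ![α, β, γ]) = 1 := by
      simpa [Fin.sum_univ_three] using hsum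
    have hcomb : (Finset.univ.affineCombination ℝ ⇑B ![α, β, γ]) =
        α • a + β • b + γ • c := by
      rw [Finset.univ.affineCombination_eq_linear_combination _ _ hw, Fin.sum_univ_three]
      simp [hB]
    rw [← hcomb, B.coord_apply_combination_of_mem (Finset.mem_univ i) hw]
    fin_cases i <;> simp [hα, hβ, hγ]

open Set in
private lemma stmt12_interior_subset_halfspace {s : Set ℂ} {g : ℂ →ₗ[ℝ] ℝ} {e : ℂ}
    (hge : g e ≠ 0) {a : ℝ} (hs : s ⊆ {x | a ≤ g x}) : ∀ x ∈ interior s, a < g x := by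
  intro x hx
  obtain ⟨ε, hε, hball⟩ := Metric.mem_nhds_iff.1 (mem_interior_iff_mem_nhds.1 hx)
  set e' : ℂ := (g e)⁻¹ • e with he'
  have hge' : g e' = 1 := by
    rw [he', map_smul, smul_eq_mul, inv_mul_cancel₀ hge]
  set δ : ℝ := ε / (2 * (‖e'‖ + 1)) with hδ
  have hpos : (0:ℝ) < ‖e'‖ + 1 := by positivity
  have hδpos : 0 < δ := by positivity
  have hy : x - δ • e' ∈ s := by
    apply hball
    rw [Metric.mem_ball, dist_eq_norm]
    have h9 : x - δ • e' - x = -(δ • e') := by ring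
    rw [h9, norm_neg, norm_smul, Real.norm_eq_abs, abs_of_pos hδpos]
    rw [hδ, div_mul_eq_mul_div, div_lt_iff₀ (by positivity)]
    nlinarith [norm_nonneg e']
  have h8 := hs hy
  simp only [mem_setOf_eq, map_sub, map_smul, hge', smul_eq_mul, mul_one] at h8
  linarith

open Set in
private lemma stmt12_collinear_of_param {u v y : ℂ} (t : ℝ) (h : y - u = t • (v - u)) :
    Collinear ℝ ({u, v, y} : Set ℂ) := by
  apply (collinear_iff_of_mem (Set.mem_insert u {v, y})).2
  refine ⟨v - u, fun p hp => ?_⟩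
  rcases hp with rfl | hp
  · exact ⟨0, by simp⟩
  rcases hp with rfl | hp
  · exact ⟨1, by simp⟩
  rcases hp with rfl
  refine ⟨t, ?_⟩
  have h4 : p - u = t • (v - u) := h
  rw [← h4]
  simp

open Set in
private lemma stmt12_key_lemma (g f : ℂ →ₗ[ℝ] ℝ) (a1 c : ℝ) (u v w z r p : ℂ)
    (huv : u ≠ v) (hg0 : g ≠ 0)
    (hgu : g u = a1) (hgv : g v = a1) (hgr : g r < a1)
    (hfu : f u < c) (hfv : f v < c) (hfw : c < f w) (hfz : c < f z)
    (hp : p ∈ openSegment ℝ u v)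
    (hnc : ¬ Collinear ℝ ({w, z, r} : Set ℂ))
    (hpint : p ∈ interior (convexHull ℝ ({w, z, r} : Set ℂ)))
    (hu : u ∉ interior (convexHull ℝ ({w, z, r} : Set ℂ)))
    (hv : v ∉ interior (convexHull ℝ ({w, z, r} : Set ℂ))) :
    a1 < g w := by
  by_contra hgw
  push_neg at hgw
  set d : ℂ := v - u with hd
  rw [openSegment_eq_image' ℝ u v] at hp
  obtain ⟨θ, hθ, hpθ0⟩ := hp
  have hpθ : u + θ • d = p := hpθ0
  have hpu : p - u = θ • d := by rw [← hpθ]; exact add_sub_cancel_left u _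
  have hgd : g d = 0 := by rw [hd, map_sub, hgu, hgv]; ring
  have hgp : g p = a1 := by
    rw [← hpθ]; simp only [map_add, map_smul, smul_eq_mul, hgd, hgu]; ring
  obtain ⟨l, m, n, hl, hm, hn, hsum, hrep⟩ := (stmt12_mem_interior_triangle hnc).1 hpint
  have hgrep : a1 = l * g w + m * g z + n * g r := by
    rw [← hgp, hrep]; simp only [map_add, map_smul, smul_eq_mul]
  have hgz : a1 < g z := by
    by_contra hgz
    push_neg at hgz
    have h1 : l * g w ≤ l * a1 := mul_le_mul_of_nonneg_left hgw hl.le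
    have h2 : m * g z ≤ m * a1 := mul_le_mul_of_nonneg_left hgz hm.le
    have h3 : n * g r < n * a1 := (mul_lt_mul_iff_right₀ hn).2 hgr
    have h4 : l * a1 + m * a1 + n * a1 = a1 := by
      rw [← add_mul, ← add_mul, hsum, one_mul]
    linarith
  set σ : ℝ := (a1 - g w) / (g z - g w) with hσ
  have hden : 0 < g z - g w := by linarith
  have hσ0 : 0 ≤ σ := by apply div_nonneg <;> linarith
  have hσ1 : σ < 1 := by rw [hσ, div_lt_one hden]; linarith
  set y1 : ℂ := w + σ • (z - w) with hy1
  have hgy1 : g y1 = a1 := by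
    simp only [hy1, map_add, map_smul, map_sub, smul_eq_mul]
    rw [hσ]; field_simp; ring
  have hy1seg : y1 ∈ segment ℝ w z := by
    rw [segment_eq_image' ℝ w z]
    exact ⟨σ, ⟨hσ0, le_of_lt hσ1⟩, rfl⟩
  have hy1hull : y1 ∈ convexHull ℝ ({w, z, r} : Set ℂ) :=
    (convex_convexHull ℝ _).segment_subset
      (subset_convexHull ℝ _ (by left; rfl))
      (subset_convexHull ℝ _ (by right; left; rfl)) hy1seg
  have hfy1 : c < f y1 := by
    have hf1 : f y1 = f w + σ * (f z - f w) := by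
      simp only [hy1, map_add, map_smul, map_sub, smul_eq_mul]
    nlinarith
  have hvu : d ≠ 0 := sub_ne_zero.2 (Ne.symm huv)
  obtain ⟨ty, hty⟩ := stmt12_line_param g hg0 hvu hgd (by rw [map_sub, hgy1, hgu]; ring)
  have hy1p : y1 - p = (ty - θ) • d := by
    have h8 : y1 - p = (y1 - u) - (p - u) := by ring
    rw [h8, hty, hpu, ← sub_smul]
  have hcomb : ∀ s' : ℝ, p + s' • (y1 - p) = u + (θ + s' * (ty - θ)) • d := by
    intro s'
    rw [hy1p, smul_smul, ← hpθ, add_smul, add_assoc]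
  rcases le_or_gt 0 ty with h0 | h0
  · rcases le_or_gt ty 1 with h1 | h1
    · have hy1uv : y1 = u + ty • d := by
        rw [← hty]; abel
      have hf2 : f y1 = f u + ty * (f v - f u) := by
        rw [hy1uv]; simp only [map_add, map_smul, smul_eq_mul, hd, map_sub]
      nlinarith
    · exfalso; apply hv
      set s' : ℝ := (1 - θ) / (ty - θ) with hs'
      have hden2 : 0 < ty - θ := by linarith [hθ.2]
      have hs0 : 0 < s' := by apply div_pos <;> linarith [hθ.2]
      have hs1 : s' < 1 := by rw [hs', div_lt_one hden2]; linarith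
      have hveq : p + s' • (y1 - p) = v := by
        rw [hcomb s']
        have h7 : θ + s' * (ty - θ) = 1 := by rw [hs']; field_simp; ring
        rw [h7, one_smul, hd]; abel
      have hvmem : v ∈ openSegment ℝ p y1 := by
        rw [openSegment_eq_image' ℝ p y1]
        exact ⟨s', ⟨hs0, hs1⟩, hveq⟩
      exact (convex_convexHull ℝ _).openSegment_interior_closure_subset_interior
        hpint (subset_closure hy1hull) hvmem
  · exfalso; apply hu
    set s' : ℝ := θ / (θ - ty) with hs'
    have hden2 : 0 < θ - ty := by linarith [hθ.1]
    have hs0 : 0 < s' := div_pos hθ.1 hden2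
    have hs1 : s' < 1 := by rw [hs', div_lt_one hden2]; linarith
    have hueq : p + s' • (y1 - p) = u := by
      rw [hcomb s']
      have h7 : θ + s' * (ty - θ) = 0 := by rw [hs']; field_simp; ring
      rw [h7, zero_smul, add_zero]
    have humem : u ∈ openSegment ℝ p y1 := by
      rw [openSegment_eq_image' ℝ p y1]
      exact ⟨s', ⟨hs0, hs1⟩, hueq⟩
    exact (convex_convexHull ℝ _).openSegment_interior_closure_subset_interior
      hpint (subset_closure hy1hull) humem

open Set in
private lemma stmt12_not_mem_hull3 {g : ℂ →ₗ[ℝ] ℝ} {a1 : ℝ} {x y z1 z2 : ℂ}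
    (hx : g x = a1) (hy : g y = a1) (hz1 : a1 < g z1) (hz2 : a1 < g z2) (hxy : x ≠ y) :
    x ∉ convexHull ℝ ({y, z1, z2} : Set ℂ) := by
  intro hmem
  rw [show ({y, z1, z2} : Set ℂ) = insert y {z1, z2} from rfl,
    convexHull_insert ⟨z1, by left; rfl⟩, mem_convexJoin] at hmem
  obtain ⟨y', hy', w', hw', hseg⟩ := hmem
  rcases hy' with rfl
  rw [convexHull_pair] at hw'
  obtain ⟨c1, c2, hc1, hc2, hc12, hw'eq⟩ := hw'
  obtain ⟨a, b, ha, hb, hab, habeq⟩ := hseg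
  have hgw' : a1 < g w' := by
    rw [← hw'eq]
    simp only [map_add, map_smul, smul_eq_mul]
    have k1 : c1 * a1 ≤ c1 * g z1 := mul_le_mul_of_nonneg_left hz1.le hc1
    have k2 : c2 * a1 ≤ c2 * g z2 := mul_le_mul_of_nonneg_left hz2.le hc2
    have k3 : c1 * a1 + c2 * a1 = a1 := by rw [← add_mul, hc12, one_mul]
    rcases eq_or_lt_of_le hc1 with h | h
    · have hc2' : c2 = 1 := by linarith
      rw [← h, hc2']; simpa using hz2
    · have k4 : c1 * a1 < c1 * g z1 := (mul_lt_mul_iff_right₀ h).2 hz1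
      linarith
  have hgx : g x = a * g y' + b * g w' := by
    rw [← habeq]; simp only [map_add, map_smul, smul_eq_mul]
  have hb0 : b = 0 := by
    by_contra hb'
    have hbpos : 0 < b := lt_of_le_of_ne hb (Ne.symm hb')
    have k1 : b * a1 < b * g w' := (mul_lt_mul_iff_right₀ hbpos).2 hgw'
    have k2 : a * a1 + b * a1 = a1 := by rw [← add_mul, hab, one_mul]
    rw [hy] at hgx
    linarith
  have ha1 : a = 1 := by linarith
  apply hxy
  rw [← habeq, hb0, ha1]
  simp

set_option maxHeartbeats 2000000 in
/-- if `R` and `B` are linearly separable and the relative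
interiors of an edge `e` of `CH(R)` and an edge `e'` of `CH(B)` both meet the
relative interior of a segment `r b` with `r ∈ R`, `b ∈ B`, then condition C1
or condition C2 holds. -/
theorem stmt12 (R B : Finset ℂ) (hdisj : Disjoint R B)
    (hgp : GenPos (↑R ∪ ↑B : Set ℂ)) (hsep : LinSep R B)
    (r b u v w z : ℂ) (hr : r ∈ R) (hb : b ∈ B)
    (he : IsHullEdge (↑R : Set ℂ) u v) (he' : IsHullEdge (↑B : Set ℂ) w z)
    (h1 : (openSegment ℝ u v ∩ openSegment ℝ r b).Nonempty)
    (h2 : (openSegment ℝ w z ∩ openSegment ℝ r b).Nonempty) :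
    CondC1 R B ∨ CondC2 R B := by
  classical
  obtain ⟨huS, hvS, huv, g, hg0, hguv, hgmax⟩ := id he
  obtain ⟨hwS, hzS, hwz, h, hh0, hhwz, hhmax⟩ := id he'
  obtain ⟨f, c, hfR, hfB⟩ := hsep
  have hur : u ∈ R := huS
  have hvr : v ∈ R := hvS
  have hwb : w ∈ B := hwS
  have hzb : z ∈ B := hzS
  set a1 : ℝ := g u with ha1
  set a2 : ℝ := h w with ha2
  have hgv : g v = a1 := hguv.symm
  have hhz : h z = a2 := hhwz.symm
  have hRB : ∀ x ∈ R, ∀ y ∈ B, x ≠ y := by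
    intro x hx y hy hxy
    exact Finset.disjoint_left.1 hdisj hx (hxy ▸ hy)
  have hub : u ≠ b := hRB u hur b hb
  have hvb : v ≠ b := hRB v hvr b hb
  have huw : u ≠ w := hRB u hur w hwb
  have huz : u ≠ z := hRB u hur z hzb
  have hvw : v ≠ w := hRB v hvr w hwb
  have hvz : v ≠ z := hRB v hvr z hzb
  have hrw : r ≠ w := hRB r hr w hwb
  have hrz : r ≠ z := hRB r hr z hzb
  have hrbne : r ≠ b := hRB r hr b hb
  have memR : ∀ x ∈ R, (x : ℂ) ∈ (↑R ∪ ↑B : Set ℂ) := fun x hx => Or.inl (by exact_mod_cast hx)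
  have memB : ∀ x ∈ B, (x : ℂ) ∈ (↑R ∪ ↑B : Set ℂ) := fun x hx => Or.inr (by exact_mod_cast hx)
  obtain ⟨p, hp_uv, hp_rb⟩ := h1
  obtain ⟨q, hq_wz, hq_rb⟩ := h2
  have hp_uv' := hp_uv
  have hq_wz' := hq_wz
  rw [openSegment_eq_image' ℝ u v] at hp_uv'
  obtain ⟨β, hβ, hpβ0⟩ := hp_uv'
  have hpβ : u + β • (v - u) = p := hpβ0
  rw [openSegment_eq_image' ℝ r b] at hp_rb
  obtain ⟨t₁, ht₁, hpt0⟩ := hp_rb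
  have hpt : r + t₁ • (b - r) = p := hpt0
  rw [openSegment_eq_image' ℝ w z] at hq_wz'
  obtain ⟨γ, hγ, hqγ0⟩ := hq_wz'
  have hqγ : w + γ • (z - w) = q := hqγ0
  rw [openSegment_eq_image' ℝ r b] at hq_rb
  obtain ⟨t₂, ht₂, hqt0⟩ := hq_rb
  have hqt : r + t₂ • (b - r) = q := hqt0
  have hp1c : (p : ℂ) = u + (β : ℂ) * (v - u) := by
    rw [← hpβ, Complex.real_smul]
  have hp2c : (p : ℂ) = r + (t₁ : ℂ) * (b - r) := by
    rw [← hpt, Complex.real_smul]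
  have hq1c : (q : ℂ) = w + (γ : ℂ) * (z - w) := by
    rw [← hqγ, Complex.real_smul]
  have hq2c : (q : ℂ) = r + (t₂ : ℂ) * (b - r) := by
    rw [← hqt, Complex.real_smul]
  have ht₁0 : (0:ℝ) < t₁ := ht₁.1
  have ht₂0 : (0:ℝ) < t₂ := ht₂.1
  have ht₁1 : t₁ < 1 := ht₁.2
  have ht₂1 : t₂ < 1 := ht₂.2
  have ht₁c : ((t₁ : ℝ) : ℂ) ≠ 0 := by exact_mod_cast ne_of_gt ht₁0
  have ht₂c : ((t₂ : ℝ) : ℂ) ≠ 0 := by exact_mod_cast ne_of_gt ht₂0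
  have h1t₂c : (1 : ℂ) - (t₂ : ℝ) ≠ 0 := by
    have h9 : ((1 - t₂ : ℝ) : ℂ) ≠ 0 := Complex.ofReal_ne_zero.2 (by linarith)
    rwa [Complex.ofReal_sub, Complex.ofReal_one] at h9
  have hncuvb : ¬ Collinear ℝ ({u, v, b} : Set ℂ) :=
    hgp u (memR u hur) v (memR v hvr) b (memB b hb) huv hub hvb
  have hncwzr : ¬ Collinear ℝ ({w, z, r} : Set ℂ) :=
    hgp w (memB w hwb) z (memB z hzb) r (memR r hr) hwz (Ne.symm hrw) (Ne.symm hrz)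
  have hrnu : r ≠ u := by
    intro e
    apply hncuvb
    have hbu : b - u = ((β / t₁ : ℝ) : ℂ) * (v - u) := by
      rw [e] at hp2c
      push_cast
      rw [div_mul_eq_mul_div, eq_div_iff ht₁c]
      linear_combination hp1c - hp2c
    have hbu' : b - u = (β / t₁ : ℝ) • (v - u) := by
      rw [Complex.real_smul]; exact hbu
    exact stmt12_collinear_of_param _ hbu'
  have hrnv : r ≠ v := by
    intro e
    apply hncuvb
    have hbu : b - u = (((β - 1) / t₁ + 1 : ℝ) : ℂ) * (v - u) := by
      rw [e] at hp2c
      push_cast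
      rw [add_mul, one_mul, div_mul_eq_mul_div, ← sub_eq_iff_eq_add, sub_sub, eq_div_iff ht₁c]
      linear_combination hp1c - hp2c
    have hbu' : b - u = ((β - 1) / t₁ + 1 : ℝ) • (v - u) := by
      rw [Complex.real_smul]; exact hbu
    exact stmt12_collinear_of_param _ hbu'
  have hbnw : b ≠ w := by
    intro e
    apply hncwzr
    have hrw' : r - w = ((γ / (1 - t₂) : ℝ) : ℂ) * (z - w) := by
      rw [e] at hq2c
      push_cast
      rw [div_mul_eq_mul_div, eq_div_iff h1t₂c]
      linear_combination hq1c - hq2c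
    have hrw'' : r - w = (γ / (1 - t₂) : ℝ) • (z - w) := by
      rw [Complex.real_smul]; exact hrw'
    exact stmt12_collinear_of_param _ hrw''
  have hbnz : b ≠ z := by
    intro e
    apply hncwzr
    have hrw' : r - w = (((γ - 1) / (1 - t₂) + 1 : ℝ) : ℂ) * (z - w) := by
      rw [e] at hq2c
      push_cast
      rw [add_mul, one_mul, div_mul_eq_mul_div, ← sub_eq_iff_eq_add, sub_sub, eq_div_iff h1t₂c]
      linear_combination hq1c - hq2c
    have hrw'' : r - w = ((γ - 1) / (1 - t₂) + 1 : ℝ) • (z - w) := by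
      rw [Complex.real_smul]; exact hrw'
    exact stmt12_collinear_of_param _ hrw''
  have hncuvr : ¬ Collinear ℝ ({u, v, r} : Set ℂ) :=
    hgp u (memR u hur) v (memR v hvr) r (memR r hr) huv (Ne.symm hrnu) (Ne.symm hrnv)
  have hncwzb : ¬ Collinear ℝ ({w, z, b} : Set ℂ) :=
    hgp w (memB w hwb) z (memB z hzb) b (memB b hb) hwz (Ne.symm hbnw) (Ne.symm hbnz)
  have hgp_eq : g p = a1 := by
    rw [← hpβ]
    simp only [map_add, map_smul, map_sub, smul_eq_mul, hgv]
    rw [ha1]; ring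
  have hhq_eq : h q = a2 := by
    rw [← hqγ]
    simp only [map_add, map_smul, map_sub, smul_eq_mul, hhz]
    rw [ha2]; ring
  have hgr_le : g r ≤ a1 := hgmax r (by exact_mod_cast hr)
  have hhb_le : h b ≤ a2 := hhmax b (by exact_mod_cast hb)
  have hgr_lt : g r < a1 := by
    rcases lt_or_eq_of_le hgr_le with hlt | heq
    · exact hlt
    · exfalso
      apply hncuvr
      obtain ⟨t, ht⟩ := stmt12_line_param g hg0 (sub_ne_zero.2 (Ne.symm huv))
        (by rw [map_sub, hgv, ha1]; ring) (by rw [map_sub, heq, ha1]; ring)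
      exact stmt12_collinear_of_param t ht
  have hhb_lt : h b < a2 := by
    rcases lt_or_eq_of_le hhb_le with hlt | heq
    · exact hlt
    · exfalso
      apply hncwzb
      obtain ⟨t, ht⟩ := stmt12_line_param h hh0 (sub_ne_zero.2 (Ne.symm hwz))
        (by rw [map_sub, hhz, ha2]; ring) (by rw [map_sub, heq, ha2]; ring)
      exact stmt12_collinear_of_param t ht
  have hgb_gt : a1 < g b := by
    have hgpt : a1 = g r + t₁ * (g b - g r) := by
      rw [← hgp_eq, ← hpt]
      simp only [map_add, map_smul, map_sub, smul_eq_mul]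
    by_contra hgb
    push_neg at hgb
    have k1 : t₁ * (g b - g r) ≤ t₁ * (a1 - g r) :=
      mul_le_mul_of_nonneg_left (by linarith) ht₁0.le
    have k2 : t₁ * (a1 - g r) < 1 * (a1 - g r) :=
      (mul_lt_mul_iff_left₀ (by linarith)).2 ht₁1
    linarith
  have hhr_gt : a2 < h r := by
    have hhqt : a2 = h r + t₂ * (h b - h r) := by
      rw [← hhq_eq, ← hqt]
      simp only [map_add, map_smul, map_sub, smul_eq_mul]
    by_contra hhr
    push_neg at hhr
    have k1 : t₂ * (h b - h r) < t₂ * (a2 - h r) :=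
      (mul_lt_mul_iff_right₀ ht₂0).2 (by linarith)
    have k2 : t₂ * (a2 - h r) ≤ 1 * (a2 - h r) :=
      mul_le_mul_of_nonneg_right ht₂1.le (by linarith)
    linarith
  have hfu : f u < c := hfR u hur
  have hfv : f v < c := hfR v hvr
  have hfr : f r < c := hfR r hr
  have hfw : c < f w := hfB w hwb
  have hfz : c < f z := hfB z hzb
  have hfb : c < f b := hfB b hb
  have hfp_lt : f p < c := by
    have hfp : f p = f u + β * (f v - f u) := by
      rw [← hpβ]; simp only [map_add, map_smul, map_sub, smul_eq_mul]
    have k1 : β * f v ≤ β * c := mul_le_mul_of_nonneg_left hfv.le hβ.1.le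
    have k2 : β * f u ≥ β * (f u) := le_refl _
    nlinarith [hβ.1, hβ.2]
  have hfq_gt : c < f q := by
    have hfq : f q = f w + γ * (f z - f w) := by
      rw [← hqγ]; simp only [map_add, map_smul, map_sub, smul_eq_mul]
    nlinarith [hγ.1, hγ.2, mul_le_mul_of_nonneg_left hfz.le hγ.1.le]
  have ht12 : t₁ < t₂ := by
    have hfpt : f p = f r + t₁ * (f b - f r) := by
      rw [← hpt]; simp only [map_add, map_smul, map_sub, smul_eq_mul]
    have hfqt : f q = f r + t₂ * (f b - f r) := by
      rw [← hqt]; simp only [map_add, map_smul, map_sub, smul_eq_mul]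
    have hD : (0:ℝ) < f b - f r := by linarith
    have k : t₁ * (f b - f r) < t₂ * (f b - f r) := by linarith
    exact (mul_lt_mul_iff_left₀ hD).1 k
  -- q as interior point of triangle u v b
  set k' : ℝ := (t₂ - t₁) / (1 - t₁) with hk'
  have hk'0 : 0 < k' := div_pos (by linarith) (by linarith)
  have hk'1 : k' < 1 := by rw [hk', div_lt_one (by linarith)]; linarith
  have hscaled1 : ((1 - t₁ : ℝ) : ℂ) * (q - p) = ((t₂ - t₁ : ℝ) : ℂ) * (b - p) := by
    push_cast
    linear_combination (1 - (t₁:ℂ)) * hq2c + ((t₂:ℂ) - 1) * hp2c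
  have hq_pb : (q : ℂ) = p + ((k' : ℝ) : ℂ) * (b - p) := by
    have e1 : ((k' : ℝ) : ℂ) = ((t₂ - t₁ : ℝ) : ℂ) / ((1 - t₁ : ℝ) : ℂ) := by
      rw [hk']; push_cast; ring
    have h1t₁c : ((1 - t₁ : ℝ) : ℂ) ≠ 0 := by
      have : (1 - t₁ : ℝ) ≠ 0 := by linarith
      exact_mod_cast this
    rw [e1, div_mul_eq_mul_div, eq_comm, add_comm, ← eq_sub_iff_add_eq, div_eq_iff h1t₁c]
    linear_combination -hscaled1
  have hqint : q ∈ interior (convexHull ℝ ({u, v, b} : Set ℂ)) := by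
    rw [stmt12_mem_interior_triangle hncuvb]
    refine ⟨(1 - k') * (1 - β), (1 - k') * β, k',
      mul_pos (by linarith) (by linarith [hβ.2]),
      mul_pos (by linarith) hβ.1, hk'0, by ring, ?_⟩
    rw [Complex.real_smul, Complex.real_smul, Complex.real_smul]
    push_cast
    linear_combination hq_pb + (1 - (k':ℂ)) * hp1c
  -- p as interior point of triangle w z r
  set k : ℝ := t₁ / t₂ with hk
  have hk0 : 0 < k := div_pos ht₁0 ht₂0
  have hk1 : k < 1 := by rw [hk, div_lt_one ht₂0]; exact ht12
  have hscaled2 : ((t₂ : ℝ) : ℂ) * (p - r) = ((t₁ : ℝ) : ℂ) * (q - r) := by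
    push_cast
    linear_combination (t₂:ℂ) * hp2c - (t₁:ℂ) * hq2c
  have hp_rq : (p : ℂ) = r + ((k : ℝ) : ℂ) * (q - r) := by
    have e1 : ((k : ℝ) : ℂ) = ((t₁ : ℝ) : ℂ) / ((t₂ : ℝ) : ℂ) := by
      rw [hk]; push_cast; ring
    rw [e1, div_mul_eq_mul_div, eq_comm, add_comm, ← eq_sub_iff_add_eq, div_eq_iff ht₂c]
    linear_combination -hscaled2
  have hpint : p ∈ interior (convexHull ℝ ({w, z, r} : Set ℂ)) := by
    rw [stmt12_mem_interior_triangle hncwzr]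
    refine ⟨k * (1 - γ), k * γ, 1 - k,
      mul_pos hk0 (by linarith [hγ.2]), mul_pos hk0 hγ.1, by linarith, by ring, ?_⟩
    rw [Complex.real_smul, Complex.real_smul, Complex.real_smul]
    push_cast
    linear_combination hp_rq + (k:ℂ) * hq1c
  -- exclusions
  have hRout : ∀ x ∈ R, (x : ℂ) ∉ openTriangle u v b := by
    intro x hx hmem
    have hmem' : (x : ℂ) ∈ interior (convexHull ℝ ({u, v, b} : Set ℂ)) := hmem
    obtain ⟨α, β', γ', hα, hβ', hγ', hsum, hrep⟩ :=
      (stmt12_mem_interior_triangle hncuvb).1 hmem'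
    have hgx_le : g x ≤ a1 := hgmax x (by exact_mod_cast hx)
    have hgx : g x = α * a1 + β' * a1 + γ' * g b := by
      rw [hrep]; simp only [map_add, map_smul, smul_eq_mul, hgv]; rw [← ha1]
    have k1 : γ' * a1 < γ' * g b := (mul_lt_mul_iff_right₀ hγ').2 hgb_gt
    have k2 : α * a1 + β' * a1 + γ' * a1 = a1 := by
      rw [← add_mul, ← add_mul, hsum, one_mul]
    linarith
  have hBout : ∀ x ∈ B, (x : ℂ) ∉ openTriangle w z r := by
    intro x hx hmem
    have hmem' : (x : ℂ) ∈ interior (convexHull ℝ ({w, z, r} : Set ℂ)) := hmem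
    obtain ⟨α, β', γ', hα, hβ', hγ', hsum, hrep⟩ :=
      (stmt12_mem_interior_triangle hncwzr).1 hmem'
    have hhx_le : h x ≤ a2 := hhmax x (by exact_mod_cast hx)
    have hhx : h x = α * a2 + β' * a2 + γ' * h r := by
      rw [hrep]; simp only [map_add, map_smul, smul_eq_mul, hhz]; rw [← ha2]
    have k1 : γ' * a2 < γ' * h r := (mul_lt_mul_iff_right₀ hγ').2 hhr_gt
    have k2 : α * a2 + β' * a2 + γ' * a2 = a2 := by
      rw [← add_mul, ← add_mul, hsum, one_mul]
    linarith
  by_cases hc1 : ∃ zz ∈ B, (zz : ℂ) ∈ openTriangle u v b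
  · obtain ⟨zz, hzzB, hzzmem⟩ := hc1
    right; left
    refine ⟨u, v, he, b, hb, zz, hzzB, hzzmem, hRout, r, hr, ?_⟩
    refine ⟨(1 - β) / (1 - t₁), β / (1 - t₁),
      div_pos (by linarith [hβ.2]) (by linarith),
      div_pos hβ.1 (by linarith), ?_⟩
    rw [Complex.real_smul, Complex.real_smul]
    have h1t₁c : ((1 - t₁ : ℝ) : ℂ) ≠ 0 := Complex.ofReal_ne_zero.2 (by linarith)
    have hkey : ((1 - t₁ : ℝ) : ℂ) * (r - b) =
        ((1 - β : ℝ) : ℂ) * (u - b) + ((β : ℝ) : ℂ) * (v - b) := by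
      push_cast
      linear_combination hp1c - hp2c
    have hdiv : (r : ℂ) - b =
        (((1 - β : ℝ) : ℂ) * (u - b) + ((β : ℝ) : ℂ) * (v - b)) / ((1 - t₁ : ℝ) : ℂ) := by
      rw [eq_div_iff h1t₁c]
      linear_combination hkey
    push_cast at hdiv ⊢
    linear_combination hdiv
  by_cases hc2 : ∃ rr ∈ R, (rr : ℂ) ∈ openTriangle w z r
  · obtain ⟨rr, hrrR, hrrmem⟩ := hc2
    right; right
    refine ⟨w, z, he', r, hr, rr, hrrR, hrrmem, hBout, b, hb, ?_⟩
    refine ⟨(1 - γ) / t₂, γ / t₂,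
      div_pos (by linarith [hγ.2]) ht₂0, div_pos hγ.1 ht₂0, ?_⟩
    rw [Complex.real_smul, Complex.real_smul]
    have hkey : ((t₂ : ℝ) : ℂ) * (b - r) =
        ((1 - γ : ℝ) : ℂ) * (w - r) + ((γ : ℝ) : ℂ) * (z - r) := by
      push_cast
      linear_combination hq1c - hq2c
    have hdiv : (b : ℂ) - r =
        (((1 - γ : ℝ) : ℂ) * (w - r) + ((γ : ℝ) : ℂ) * (z - r)) / ((t₂ : ℝ) : ℂ) := by
      rw [eq_div_iff ht₂c]
      linear_combination hkey
    push_cast at hdiv ⊢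
    linear_combination hdiv
  · -- Case 3 : C1 holds
    push_neg at hc1 hc2
    left
    have hc2' : ∀ x ∈ R, (x : ℂ) ∉ interior (convexHull ℝ ({w, z, r} : Set ℂ)) := hc2
    have hc1' : ∀ x ∈ B, (x : ℂ) ∉ interior (convexHull ℝ ({u, v, b} : Set ℂ)) := hc1
    have hgw_gt : a1 < g w :=
      stmt12_key_lemma g f a1 c u v w z r p huv hg0 rfl hgv hgr_lt hfu hfv hfw hfz
        hp_uv hncwzr hpint (hc2' u hur) (hc2' v hvr)
    have hsetzw : ({z, w, r} : Set ℂ) = {w, z, r} := Set.insert_comm z w {r}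
    have hgz_gt : a1 < g z :=
      stmt12_key_lemma g f a1 c u v z w r p huv hg0 rfl hgv hgr_lt hfu hfv hfz hfw
        hp_uv (by rw [hsetzw]; exact hncwzr) (by rw [hsetzw]; exact hpint)
        (by rw [hsetzw]; exact hc2' u hur) (by rw [hsetzw]; exact hc2' v hvr)
    have hhu_gt : a2 < h u :=
      stmt12_key_lemma h (-f) a2 (-c) w z u v b q hwz hh0 rfl hhz hhb_lt
        (by simp only [LinearMap.neg_apply]; linarith)
        (by simp only [LinearMap.neg_apply]; linarith)
        (by simp only [LinearMap.neg_apply]; linarith)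
        (by simp only [LinearMap.neg_apply]; linarith)
        hq_wz hncuvb hqint (hc1' w hwb) (hc1' z hzb)
    have hsetvu : ({v, u, b} : Set ℂ) = {u, v, b} := Set.insert_comm v u {b}
    have hhv_gt : a2 < h v :=
      stmt12_key_lemma h (-f) a2 (-c) w z v u b q hwz hh0 rfl hhz hhb_lt
        (by simp only [LinearMap.neg_apply]; linarith)
        (by simp only [LinearMap.neg_apply]; linarith)
        (by simp only [LinearMap.neg_apply]; linarith)
        (by simp only [LinearMap.neg_apply]; linarith)
        hq_wz (by rw [hsetvu]; exact hncuvb) (by rw [hsetvu]; exact hqint)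
        (by rw [hsetvu]; exact hc1' w hwb) (by rw [hsetvu]; exact hc1' z hzb)
    obtain ⟨eg, heg⟩ := stmt12_exists_apply_ne_zero g hg0
    obtain ⟨eh, heh⟩ := stmt12_exists_apply_ne_zero h hh0
    have hQg : ({u, v, w, z} : Set ℂ) ⊆ {x | a1 ≤ g x} := by
      rintro x (rfl | rfl | rfl | rfl)
      · exact le_of_eq ha1
      · exact le_of_eq hgv.symm
      · exact le_of_lt hgw_gt
      · exact le_of_lt hgz_gt
    have hQh : ({u, v, w, z} : Set ℂ) ⊆ {x | a2 ≤ h x} := by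
      rintro x (rfl | rfl | rfl | rfl)
      · exact le_of_lt hhu_gt
      · exact le_of_lt hhv_gt
      · exact le_of_eq ha2
      · exact le_of_eq hhz.symm
    have hconvQg : convexHull ℝ ({u, v, w, z} : Set ℂ) ⊆ {x | a1 ≤ g x} :=
      convexHull_min hQg (convex_halfSpace_ge g.isLinear a1)
    have hconvQh : convexHull ℝ ({u, v, w, z} : Set ℂ) ⊆ {x | a2 ≤ h x} :=
      convexHull_min hQh (convex_halfSpace_ge h.isLinear a2)
    have hintQg := stmt12_interior_subset_halfspace heg hconvQg
    have hintQh := stmt12_interior_subset_halfspace heh hconvQh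
    have hRhull : convexHull ℝ (↑R : Set ℂ) ⊆ {x | g x ≤ a1} :=
      convexHull_min (fun x hx => hgmax x hx) (convex_halfSpace_le g.isLinear a1)
    have hBhull : convexHull ℝ (↑B : Set ℂ) ⊆ {x | h x ≤ a2} :=
      convexHull_min (fun x hx => hhmax x hx) (convex_halfSpace_le h.isLinear a2)
    refine ⟨u, v, w, z, he, he', ⟨?_, ?_, ?_, ?_, ?_, ?_⟩, ?_, ?_⟩
    · -- pairwise distinct
      simp only [List.pairwise_cons, List.mem_cons, List.mem_singleton,
        List.not_mem_nil, List.Pairwise.nil]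
      refine ⟨?_, ?_, ?_, fun a' hf => hf.elim, trivial⟩
      · rintro a' (rfl | rfl | rfl | hfalse)
        · exact huv
        · exact huw
        · exact huz
        · exact hfalse.elim
      · rintro a' (rfl | rfl | hfalse)
        · exact hvw
        · exact hvz
        · exact hfalse.elim
      · rintro a' (rfl | hfalse)
        · exact hwz
        · exact hfalse.elim
    · -- convex position
      intro x hx
      rcases hx with rfl | rfl | rfl | rfl
      · intro hmem
        have hsub : ({x, v, w, z} : Set ℂ) \ {x} ⊆ ({v, w, z} : Set ℂ) := by
          rintro y ⟨(rfl | rfl | rfl | rfl), hy2⟩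
          · exact absurd rfl hy2
          · exact Or.inl rfl
          · exact Or.inr (Or.inl rfl)
          · exact Or.inr (Or.inr rfl)
        exact stmt12_not_mem_hull3 ha1.symm hgv hgw_gt hgz_gt huv
          (convexHull_mono hsub hmem)
      · intro hmem
        have hsub : ({u, x, w, z} : Set ℂ) \ {x} ⊆ ({u, w, z} : Set ℂ) := by
          rintro y ⟨(rfl | rfl | rfl | rfl), hy2⟩
          · exact Or.inl rfl
          · exact absurd rfl hy2
          · exact Or.inr (Or.inl rfl)
          · exact Or.inr (Or.inr rfl)
        exact stmt12_not_mem_hull3 hgv ha1.symm hgw_gt hgz_gt (Ne.symm huv)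
          (convexHull_mono hsub hmem)
      · intro hmem
        have hsub : ({u, v, x, z} : Set ℂ) \ {x} ⊆ ({z, u, v} : Set ℂ) := by
          rintro y ⟨(rfl | rfl | rfl | rfl), hy2⟩
          · exact Or.inr (Or.inl rfl)
          · exact Or.inr (Or.inr rfl)
          · exact absurd rfl hy2
          · exact Or.inl rfl
        exact stmt12_not_mem_hull3 ha2.symm hhz hhu_gt hhv_gt hwz
          (convexHull_mono hsub hmem)
      · intro hmem
        have hsub : ({u, v, w, x} : Set ℂ) \ {x} ⊆ ({w, u, v} : Set ℂ) := by
          rintro y ⟨(rfl | rfl | rfl | rfl), hy2⟩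
          · exact Or.inr (Or.inl rfl)
          · exact Or.inr (Or.inr rfl)
          · exact Or.inl rfl
          · exact absurd rfl hy2
        exact stmt12_not_mem_hull3 hhz ha2.symm hhu_gt hhv_gt (Ne.symm hwz)
          (convexHull_mono hsub hmem)
    · -- subset of S
      rintro x (rfl | rfl | rfl | rfl)
      · exact Or.inl (by exact_mod_cast hur)
      · exact Or.inl (by exact_mod_cast hvr)
      · exact Or.inr (by exact_mod_cast hwb)
      · exact Or.inr (by exact_mod_cast hzb)
    · -- ncard R
      have hRint : (({u, v, w, z} : Set ℂ) ∩ ↑R) = ({u, v} : Set ℂ) := by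
        ext x
        constructor
        · rintro ⟨(rfl | rfl | rfl | rfl), hxR⟩
          · exact Or.inl rfl
          · exact Or.inr rfl
          · exact absurd rfl (hRB x (by exact_mod_cast hxR) x hwb)
          · exact absurd rfl (hRB x (by exact_mod_cast hxR) x hzb)
        · rintro (rfl | rfl)
          · exact ⟨Or.inl rfl, by exact_mod_cast hur⟩
          · exact ⟨Or.inr (Or.inl rfl), by exact_mod_cast hvr⟩
      rw [hRint]
      exact Set.ncard_pair huv
    · -- ncard B
      have hBint : (({u, v, w, z} : Set ℂ) ∩ ↑B) = ({w, z} : Set ℂ) := by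
        ext x
        constructor
        · rintro ⟨(rfl | rfl | rfl | rfl), hxB⟩
          · exact absurd rfl (hRB x hur x (by exact_mod_cast hxB))
          · exact absurd rfl (hRB x hvr x (by exact_mod_cast hxB))
          · exact Or.inl rfl
          · exact Or.inr rfl
        · rintro (rfl | rfl)
          · exact ⟨Or.inr (Or.inr (Or.inl rfl)), by exact_mod_cast hwb⟩
          · exact ⟨Or.inr (Or.inr (Or.inr rfl)), by exact_mod_cast hzb⟩
      rw [hBint]
      exact Set.ncard_pair hwz
    · -- interior empty of S-points
      rintro x (hxR | hxB) hmem
      · exact absurd (hgmax x hxR) (not_le.2 (hintQg x hmem))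
      · exact absurd (hhmax x hxB) (not_le.2 (hintQh x hmem))
    · -- interior disjoint from CH(R)
      apply Set.eq_empty_iff_forall_notMem.2
      rintro x ⟨hx1, hx2⟩
      exact absurd (hRhull hx2) (not_le.2 (hintQg x hx1))
    · -- interior disjoint from CH(B)
      apply Set.eq_empty_iff_forall_notMem.2
      rintro x ⟨hx1, hx2⟩
      exact absurd (hBhull hx2) (not_le.2 (hintQh x hx1))
end
end

section
/- Let S = R ∪ B be a finite bicolored point set in general position in the plane, let r ∈ R be a red point, and let b and b' be two blue points consecutive in the radial order around r, with the open wedge W(r,b,b') spanning an angle less than π. If the open triangle with vertices r, b, b' contains at least one and at most two red points, then S has a balanced 4-hole having the segment rb as an edge. -/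
noncomputable section

section Work
open Set
/-- signed area determinant -/
def Dt (a b c : ℂ) : ℝ := (b - a).re * (c - a).im - (b - a).im * (c - a).re

lemma Dt_cyc (a b c : ℂ) : Dt a b c = Dt b c a := by simp [Dt]; ring
lemma Dt_swap (a b c : ℂ) : Dt a b c = - Dt a c b := by simp [Dt]; ring
lemma Dt_self (a b : ℂ) : Dt a b b = 0 := by simp [Dt]; ring
lemma Dt_self' (a b : ℂ) : Dt a a b = 0 := by simp [Dt]
lemma Dt_affine (a b : ℂ) (x y : ℂ) (t : ℝ) :
    Dt a b ((1 - t) • x + t • y) = (1 - t) * Dt a b x + t * Dt a b y := by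
  simp [Dt, Complex.add_re, Complex.add_im, Complex.smul_re, Complex.smul_im]; ring
lemma Dt_left (a b : ℂ) : Dt a b a = 0 := by simp [Dt]
lemma Dt_sum (a b c x : ℂ) : Dt x b c + Dt a x c + Dt a b x = Dt a b c := by
  simp [Dt]; ring

lemma Dt_smul_id (a b c x : ℂ) :
    (Dt a b c) • x = (Dt x b c) • a + (Dt a x c) • b + (Dt a b x) • c := by
  apply Complex.ext <;>
  · simp only [Complex.add_re, Complex.add_im, Complex.smul_re, Complex.smul_im, Dt,
      smul_eq_mul, Complex.sub_re, Complex.sub_im]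
    ring

lemma Dt_cramer {a b c : ℂ} (h : Dt a b c ≠ 0) (x : ℂ) :
    x = (Dt x b c / Dt a b c) • a + (Dt a x c / Dt a b c) • b + (Dt a b x / Dt a b c) • c := by
  have := Dt_smul_id a b c x
  have h2 : (Dt a b c)⁻¹ • ((Dt a b c) • x) =
      (Dt a b c)⁻¹ • ((Dt x b c) • a + (Dt a x c) • b + (Dt a b x) • c) := by rw [this]
  rw [smul_smul, inv_mul_cancel₀ h, one_smul] at h2
  simpa only [smul_add, smul_smul, div_eq_inv_mul] using h2

lemma collinear_of_Dt {a b c : ℂ} (h : Dt a b c = 0) : Collinear ℝ ({a, b, c} : Set ℂ) := by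
  by_cases hab : b = a
  · subst hab
    rw [Set.insert_comm, Set.pair_comm]
    exact collinear_insert_of_mem_affineSpan_pair
      (right_mem_affineSpan_pair ℝ c b)
  · rw [collinear_iff_of_mem (Set.mem_insert a {b, c})]
    refine ⟨b - a, ?_⟩
    intro p hp
    have key : ∀ q : ℂ, Dt a b q = 0 → ∃ t : ℝ, q = t • (b - a) + a := by
      intro q hq
      by_cases hre : (b - a).re ≠ 0
      · refine ⟨(q - a).re / (b - a).re, ?_⟩
        apply Complex.ext <;>
          simp only [Complex.add_re, Complex.add_im, Complex.smul_re, Complex.smul_im,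
            Complex.sub_re, Complex.sub_im, Dt] at *
        · rw [smul_eq_mul, div_mul_cancel₀ _ hre]; ring
        · rw [smul_eq_mul]
          field_simp
          nlinarith [hq]
      · push_neg at hre
        have him0 : (b - a).im ≠ 0 := by
          intro h0
          exact hab (by apply Complex.ext <;>
            simp only [Complex.sub_re, Complex.sub_im] at * <;> linarith)
        refine ⟨(q - a).im / (b - a).im, ?_⟩
        apply Complex.ext <;>
          simp only [Complex.add_re, Complex.add_im, Complex.smul_re, Complex.smul_im,
            Complex.sub_re, Complex.sub_im, Dt] at *
        · rw [smul_eq_mul]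
          field_simp
          nlinarith [hq]
        · rw [smul_eq_mul, div_mul_cancel₀ _ him0]; ring
    rcases hp with rfl | rfl | rfl
    · exact ⟨0, by simp⟩
    · exact ⟨1, by simp⟩
    · exact key _ h

lemma Dt_eq_zero_of_collinear {a b c : ℂ} (h : Collinear ℝ ({a, b, c} : Set ℂ)) :
    Dt a b c = 0 := by
  obtain ⟨v, hv⟩ := (collinear_iff_of_mem (Set.mem_insert a {b, c})).1 h
  obtain ⟨s, hs⟩ := hv b (by simp)
  obtain ⟨t, ht⟩ := hv c (by simp)
  subst hs ht
  simp only [Dt, Complex.add_re, Complex.add_im, Complex.smul_re, Complex.smul_im,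
    smul_eq_mul, Complex.sub_re, Complex.sub_im, vadd_eq_add]
  ring

lemma Dt_ne_of_not_collinear {a b c : ℂ} (h : ¬ Collinear ℝ ({a, b, c} : Set ℂ)) :
    Dt a b c ≠ 0 := fun h0 => h (collinear_of_Dt h0)

lemma Dt_to_collinear {a b c : ℂ} (h : Dt a b c = 0) : Collinear ℝ ({a, b, c} : Set ℂ) :=
  collinear_of_Dt h

section basis
open Finset in
/-- triangle interior characterization -/
lemma mem_openTri_iff {a b c : ℂ} (h : ¬ Collinear ℝ ({a, b, c} : Set ℂ)) (x : ℂ) :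
    x ∈ interior (convexHull ℝ ({a, b, c} : Set ℂ)) ↔
      (0 < Dt x b c / Dt a b c ∧ 0 < Dt a x c / Dt a b c ∧ 0 < Dt a b x / Dt a b c) := by
  classical
  have ho : Dt a b c ≠ 0 := Dt_ne_of_not_collinear h
  have hai : AffineIndependent ℝ ![a, b, c] := affineIndependent_iff_not_collinear_set.2 h
  have htot : affineSpan ℝ (Set.range ![a, b, c]) = ⊤ := by
    rw [hai.affineSpan_eq_top_iff_card_eq_finrank_add_one]
    simp [Complex.finrank_real_complex]
  let bas : AffineBasis (Fin 3) ℝ ℂ := ⟨![a, b, c], hai, htot⟩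
  have hrange : Set.range ![a, b, c] = ({a, b, c} : Set ℂ) := by
    ext y
    constructor
    · rintro ⟨i, rfl⟩; fin_cases i <;> simp
    · rintro (rfl | rfl | rfl)
      exacts [⟨0, rfl⟩, ⟨1, rfl⟩, ⟨2, rfl⟩]
  have hint := bas.interior_convexHull
  have hpts : (bas : Fin 3 → ℂ) = ![a, b, c] := rfl
  rw [show Set.range bas = Set.range ![a,b,c] from rfl, hrange] at hint
  rw [hint]
  -- compute coordinates
  have hw : ∀ y : ℂ, (Finset.univ : Finset (Fin 3)).sum
      (fun i => ![Dt y b c / Dt a b c, Dt a y c / Dt a b c, Dt a b y / Dt a b c] i) = 1 := by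
    intro y
    have := Dt_sum a b c y
    simp [Fin.sum_univ_three]
    field_simp
    linarith [Dt_sum a b c y]
  have hcoord : ∀ y : ℂ, ∀ i : Fin 3, bas.coord i y =
      ![Dt y b c / Dt a b c, Dt a y c / Dt a b c, Dt a b y / Dt a b c] i := by
    intro y i
    have hyc : y = (Finset.univ : Finset (Fin 3)).affineCombination ℝ (bas : Fin 3 → ℂ)
        ![Dt y b c / Dt a b c, Dt a y c / Dt a b c, Dt a b y / Dt a b c] := by
      rw [Finset.affineCombination_eq_linear_combination _ _ _ (hw y)]
      rw [hpts, Fin.sum_univ_three]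
      simp only [Matrix.cons_val_zero, Matrix.cons_val_one, Matrix.head_cons,
        Matrix.cons_val_two, Matrix.tail_cons]
      exact Dt_cramer ho y
    conv_lhs => rw [hyc]
    rw [AffineBasis.coord_apply_combination_of_mem _ (Finset.mem_univ i) (hw y)]
  constructor
  · intro hx
    refine ⟨?_, ?_, ?_⟩
    · have := hx 0; rw [hcoord x 0] at this; simpa using this
    · have := hx 1; rw [hcoord x 1] at this; simpa using this
    · have := hx 2; rw [hcoord x 2] at this; simpa using this
  · rintro ⟨h1, h2, h3⟩ i
    rw [hcoord x i]
    fin_cases i <;> simpa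
end basis

lemma mem_openTri_pos {a b c : ℂ} (h : 0 < Dt a b c) (x : ℂ) :
    x ∈ openTriangle a b c ↔ (0 < Dt a b x ∧ 0 < Dt b c x ∧ 0 < Dt c a x) := by
  have hnc : ¬ Collinear ℝ ({a, b, c} : Set ℂ) := fun hc =>
    absurd (Dt_eq_zero_of_collinear hc) (ne_of_gt h)
  rw [openTriangle, mem_openTri_iff hnc x]
  have e1 : Dt x b c = Dt b c x := by rw [Dt_cyc]
  have e2 : Dt a x c = Dt c a x := by rw [Dt_cyc, Dt_cyc]
  rw [e1, e2]
  have key : ∀ y : ℝ, 0 < y / Dt a b c ↔ 0 < y := by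
    intro y
    rw [div_pos_iff]
    constructor
    · rintro (⟨hy, -⟩ | ⟨-, ho⟩)
      · exact hy
      · linarith
    · intro hy; exact Or.inl ⟨hy, h⟩
  rw [key, key, key]
  tauto

lemma mem_seg_Dt {u v x y z : ℂ} (hz : z ∈ segment ℝ x y) :
    ∃ t : ℝ, 0 ≤ t ∧ t ≤ 1 ∧ Dt u v z = (1 - t) * Dt u v x + t * Dt u v y := by
  rw [segment_eq_image] at hz
  obtain ⟨t, ht, rfl⟩ := hz
  exact ⟨t, ht.1, ht.2, Dt_affine u v x y t⟩

lemma seg_adj {a b c : ℂ} (h : Dt a b c ≠ 0) :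
    segment ℝ a b ∩ segment ℝ b c = {b} := by
  ext x
  simp only [Set.mem_inter_iff, Set.mem_singleton_iff]
  constructor
  · rintro ⟨hx1, hx2⟩
    rw [segment_eq_image] at hx2
    obtain ⟨t, ht, rfl⟩ := hx2
    obtain ⟨s, _, _, hs⟩ := mem_seg_Dt (u := a) (v := b) hx1
    rw [Dt_affine, Dt_left, Dt_self] at hs
    have ht0 : t = 0 := by
      have : t * Dt a b c = 0 := by linarith [hs]
      rcases mul_eq_zero.1 this with h' | h'
      · exact h'
      · exact absurd h' h
    simp [ht0]
  · rintro rfl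
    exact ⟨right_mem_segment _ _ _, left_mem_segment _ _ _⟩

lemma seg_disj {u v p q s t : ℂ} (h1 : Dt u v p ≤ 0) (h2 : Dt u v q ≤ 0)
    (h3 : 0 < Dt u v s) (h4 : 0 < Dt u v t) :
    segment ℝ p q ∩ segment ℝ s t = ∅ := by
  ext x
  simp only [Set.mem_inter_iff, Set.mem_empty_iff_false, iff_false, not_and]
  intro hx1 hx2
  obtain ⟨t1, ht10, ht11, he1⟩ := mem_seg_Dt (u := u) (v := v) hx1
  obtain ⟨t2, ht20, ht21, he2⟩ := mem_seg_Dt (u := u) (v := v) hx2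
  have hx1' : Dt u v x ≤ 0 := by
    nlinarith [mul_nonneg (sub_nonneg.2 ht11) (neg_nonneg.2 h1), mul_nonneg ht10 (neg_nonneg.2 h2)]
  have hx2' : 0 < Dt u v x := by
    rcases lt_or_eq_of_le ht21 with h' | h'
    · nlinarith [mul_pos (sub_pos.2 h') h3, mul_nonneg ht20 h4.le]
    · rw [← h'] at he2; nlinarith
  linarith

lemma vertex_mem_quadBdry₁ (a b c d : ℂ) : a ∈ QuadBdry a b c d :=
  Or.inl (Or.inl (Or.inl (left_mem_segment ℝ a b)))
lemma vertex_mem_quadBdry₂ (a b c d : ℂ) : b ∈ QuadBdry a b c d :=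
  Or.inl (Or.inl (Or.inl (right_mem_segment ℝ a b)))
lemma vertex_mem_quadBdry₃ (a b c d : ℂ) : c ∈ QuadBdry a b c d :=
  Or.inl (Or.inl (Or.inr (right_mem_segment ℝ b c)))
lemma vertex_mem_quadBdry₄ (a b c d : ℂ) : d ∈ QuadBdry a b c d :=
  Or.inr (left_mem_segment ℝ d a)

lemma notMem_quadInterior_of_mem_bdry {a b c d x : ℂ} (h : x ∈ QuadBdry a b c d) :
    x ∉ QuadInterior a b c d := fun hx => hx.1 h

/-- if the boundary lies in `{Dt u v ≥ 0}` on all four vertices, it lies there everywhere -/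
lemma quadBdry_nonneg {u v a b c d : ℂ} (ha : 0 ≤ Dt u v a) (hb : 0 ≤ Dt u v b)
    (hc : 0 ≤ Dt u v c) (hd : 0 ≤ Dt u v d) :
    ∀ x ∈ QuadBdry a b c d, 0 ≤ Dt u v x := by
  intro x hx
  rcases hx with ((h | h) | h) | h <;>
  · obtain ⟨t, ht0, ht1, he⟩ := mem_seg_Dt (u := u) (v := v) h
    nlinarith

lemma Dt_midpoint (u v : ℂ) : Dt u v (((1:ℝ)/2) • u + ((1:ℝ)/2) • v) = 0 := by
  simp only [Dt, Complex.add_re, Complex.add_im, Complex.smul_re, Complex.smul_im,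
    smul_eq_mul, Complex.sub_re, Complex.sub_im]
  ring

lemma Dt_two_sub (u v m w : ℂ) : Dt u v ((2:ℝ) • m - w) = 2 * Dt u v m - Dt u v w := by
  simp only [Dt, Complex.add_re, Complex.add_im, Complex.smul_re, Complex.smul_im,
    smul_eq_mul, Complex.sub_re, Complex.sub_im]
  ring

lemma Dt_ray (u v : ℂ) (t : ℝ) :
    Dt u v (u + t • (-Complex.I * (v - u))) = -t * ((v-u).re^2 + (v-u).im^2) := by
  simp only [Dt, Complex.add_re, Complex.add_im, Complex.smul_re, Complex.smul_im,
    smul_eq_mul, Complex.sub_re, Complex.sub_im, Complex.mul_re, Complex.mul_im,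
    Complex.neg_re, Complex.neg_im, Complex.I_re, Complex.I_im]
  ring

lemma convex_halfplane (u v : ℂ) : Convex ℝ {y : ℂ | Dt u v y < 0} := by
  intro x hx y hy s t hs ht hst
  simp only [Set.mem_setOf_eq] at hx hy ⊢
  have : s • x + t • y = (1 - t) • x + t • y := by rw [show s = 1 - t by linarith]
  rw [this, Dt_affine]
  rcases lt_or_eq_of_le ht with h' | h'
  · nlinarith [mul_nonneg hs (neg_nonneg.2 hx.le), mul_pos h' (neg_pos.2 hy)]
  · rw [← h']; simpa using hx

lemma unbounded_halfplane {u v : ℂ} (huv : u ≠ v) :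
    ¬ Bornology.IsBounded {y : ℂ | Dt u v y < 0} := by
  intro hb
  obtain ⟨C, hC⟩ := isBounded_iff_forall_norm_le.1 hb
  have hvu : v - u ≠ 0 := sub_ne_zero.2 huv.symm
  have hnorm : (0:ℝ) < ‖v - u‖ := norm_pos_iff.2 hvu
  set t : ℝ := (max C 0 + ‖u‖ + 1) / ‖v - u‖ with ht
  have hmax : 0 ≤ max C 0 := le_max_right C 0
  have htpos : 0 < t := by
    apply div_pos _ hnorm
    positivity
  set p : ℂ := u + t • (-Complex.I * (v - u)) with hp
  have hmem : p ∈ {y : ℂ | Dt u v y < 0} := by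
    rw [Set.mem_setOf_eq, hp, Dt_ray]
    have : (0:ℝ) < (v-u).re^2 + (v-u).im^2 := by
      have := Complex.normSq_pos.2 hvu
      simpa [Complex.normSq_apply, sq] using this
    nlinarith
  have hnp : ‖p‖ ≤ C := hC p hmem
  have h1 : ‖t • (-Complex.I * (v - u))‖ = t * ‖v - u‖ := by
    rw [norm_smul, norm_mul, norm_neg, Complex.norm_I, one_mul, Real.norm_eq_abs,
      abs_of_pos htpos]
  have hpu : p - u = t • (-Complex.I * (v - u)) := by rw [hp]; module
  have h2 : t * ‖v - u‖ ≤ ‖p‖ + ‖u‖ := by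
    calc t * ‖v - u‖ = ‖t • (-Complex.I * (v - u))‖ := h1.symm
    _ = ‖p - u‖ := by rw [hpu]
    _ ≤ ‖p‖ + ‖u‖ := norm_sub_le p u
  have h3 : t * ‖v - u‖ = max C 0 + ‖u‖ + 1 := by
    rw [ht]; exact div_mul_cancel₀ _ (ne_of_gt hnorm)
  have h4 : C ≤ max C 0 := le_max_left C 0
  linarith

lemma notMem_quadInterior_of_unbounded_escape {a b c d x : ℂ} (C : Set ℂ)
    (hC : IsPreconnected C) (hxC : x ∈ C) (hdisj : ∀ y ∈ C, y ∉ QuadBdry a b c d)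
    (hunb : ¬ Bornology.IsBounded C) : x ∉ QuadInterior a b c d := by
  intro hx
  exact hunb (hx.2.subset (hC.subset_connectedComponentIn hxC
    (fun y hy => Set.mem_compl (hdisj y hy))))

lemma notMem_quadInterior_of_neg {u v a b c d x : ℂ} (huv : u ≠ v)
    (ha : 0 ≤ Dt u v a) (hb : 0 ≤ Dt u v b) (hc : 0 ≤ Dt u v c) (hd : 0 ≤ Dt u v d)
    (hx : Dt u v x < 0) : x ∉ QuadInterior a b c d := by
  refine notMem_quadInterior_of_unbounded_escape {y : ℂ | Dt u v y < 0}
    (convex_halfplane u v).isPreconnected hx ?_ (unbounded_halfplane huv)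
  intro y hy hybd
  exact absurd (quadBdry_nonneg ha hb hc hd y hybd) (not_le.2 hy)

lemma notMem_quadInterior_of_gate {u v a b c d w : ℂ} (huv : u ≠ v)
    (ha : 0 ≤ Dt u v a) (hb : 0 ≤ Dt u v b) (hc : 0 ≤ Dt u v c) (hd : 0 ≤ Dt u v d)
    (hw : 0 < Dt u v w)
    (hseg : ∀ y ∈ segment ℝ w (((1:ℝ)/2) • u + ((1:ℝ)/2) • v), y ∉ QuadBdry a b c d) :
    w ∉ QuadInterior a b c d := by
  set m : ℂ := ((1:ℝ)/2) • u + ((1:ℝ)/2) • v with hm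
  set z' : ℂ := (2:ℝ) • m - w with hz'
  have hz'neg : Dt u v z' < 0 := by
    rw [hz', Dt_two_sub, hm, Dt_midpoint]
    linarith
  refine notMem_quadInterior_of_unbounded_escape
    (segment ℝ w z' ∪ {y : ℂ | Dt u v y < 0}) ?_ ?_ ?_ ?_
  · apply IsPreconnected.union z'
    · exact right_mem_segment _ _ _
    · exact hz'neg
    · exact (convex_segment w z').isPreconnected
    · exact (convex_halfplane u v).isPreconnected
  · exact Or.inl (left_mem_segment _ _ _)
  · rintro y (hy | hy)
    · rw [segment_eq_image] at hy
      obtain ⟨t, ⟨ht0, ht1⟩, rfl⟩ := hy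
      by_cases htc : t ≤ 1/2
      · apply hseg
        rw [segment_eq_image]
        refine ⟨2 * t, ⟨by linarith, by linarith⟩, ?_⟩
        rw [hz']
        module
      · intro hybd
        have h1 : Dt u v ((1-t) • w + t • z') = (1 - t) * Dt u v w + t * Dt u v z' :=
          Dt_affine u v w z' t
        have h2 : Dt u v z' = - Dt u v w := by
          rw [hz', Dt_two_sub, hm, Dt_midpoint]; ring
        have hneg : Dt u v ((1-t) • w + t • z') < 0 := by
          rw [h1, h2]; nlinarith
        exact absurd (quadBdry_nonneg ha hb hc hd _ hybd) (not_le.2 hneg)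
    · intro hybd
      exact absurd (quadBdry_nonneg ha hb hc hd y hybd) (not_le.2 hy)
  · intro hbd
    exact unbounded_halfplane huv (hbd.subset Set.subset_union_right)

lemma Dt_distinct {x y z : ℂ} (h : Dt x y z ≠ 0) : x ≠ y ∧ x ≠ z ∧ y ≠ z := by
  refine ⟨?_, ?_, ?_⟩ <;> rintro rfl
  · exact h (Dt_self' x z)
  · exact h (Dt_left x y)
  · exact h (Dt_self x y)

lemma core_simple {a b c d : ℂ} (h1 : 0 < Dt a b c) (h2 : 0 < Dt a c d)
    (h3 : Dt b c d ≠ 0) (h5 : 0 < Dt a b d) (h6 : 0 < Dt d a c) :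
    IsSimpleQuad a b c d := by
  obtain ⟨hab, hac, hbc⟩ := Dt_distinct (ne_of_gt h1)
  obtain ⟨-, had, hcd⟩ := Dt_distinct (ne_of_gt h2)
  obtain ⟨-, -, hbd⟩ := Dt_distinct (ne_of_gt h5)
  refine ⟨?_, ?_, ?_, ?_, ?_, ?_, ?_⟩
  · simp_all [List.pairwise_cons]
  · exact seg_adj (ne_of_gt h1)
  · exact seg_adj h3
  · apply seg_adj
    have : Dt c d a = Dt a c d := by rw [Dt_cyc, Dt_cyc]
    rw [this]; exact ne_of_gt h2
  · apply seg_adj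
    have : Dt d a b = Dt a b d := by rw [Dt_cyc]
    rw [this]; exact ne_of_gt h5
  · exact seg_disj (le_of_eq (Dt_left a b)) (le_of_eq (Dt_self a b)) h1 h5
  · rw [Set.inter_comm]
    apply seg_disj (le_of_eq (Dt_left d a)) (le_of_eq (Dt_self d a))
    · rw [show Dt d a b = Dt a b d by rw [Dt_cyc]]; exact h5
    · exact h6

lemma quadBdry_rot (a b c d : ℂ) : QuadBdry b c d a = QuadBdry a b c d := by
  unfold QuadBdry
  ext x; simp only [Set.mem_union]; tauto

lemma quadBdry_rev (a b c d : ℂ) : QuadBdry d c b a = QuadBdry a b c d := by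
  unfold QuadBdry
  rw [segment_symm ℝ d c, segment_symm ℝ c b, segment_symm ℝ b a, segment_symm ℝ a d]
  ext x; simp only [Set.mem_union]; tauto

lemma quad_rot {R B : Finset ℂ} {a b c d : ℂ} (h : IsBalanced4Hole R B a b c d) :
    IsBalanced4Hole R B b c d a := by
  obtain ⟨⟨hpw, e1, e2, e3, e4, e5, e6⟩, hsub, hR, hB, hemp⟩ := h
  have hset : ({b, c, d, a} : Set ℂ) = ({a, b, c, d} : Set ℂ) := by
    ext x; simp only [Set.mem_insert_iff, Set.mem_singleton_iff]; tauto
  refine ⟨⟨?_, e2, e3, e4, e1, ?_, ?_⟩, ?_, ?_, ?_, ?_⟩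
  · have hpw' := hpw
    simp only [List.pairwise_cons, List.mem_cons, List.not_mem_nil, or_false,
      List.mem_singleton, ne_eq] at hpw' ⊢
    obtain ⟨h1', h2', h3', -⟩ := hpw'
    have nab : a ≠ b := h1' b (Or.inl rfl)
    have nac : a ≠ c := h1' c (Or.inr (Or.inl rfl))
    have nad : a ≠ d := h1' d (Or.inr (Or.inr rfl))
    have nbc : b ≠ c := h2' c (Or.inl rfl)
    have nbd : b ≠ d := h2' d (Or.inr rfl)
    have ncd : c ≠ d := h3' d rfl
    have nba := nab.symm; have nca := nac.symm; have nda := nad.symm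
    have ncb := nbc.symm; have ndb := nbd.symm; have ndc := ncd.symm
    refine ⟨?_, ?_, ?_, fun a' h' => absurd h' not_false, List.Pairwise.nil⟩
    · rintro a' (rfl | rfl | rfl) <;> assumption
    · rintro a' (rfl | rfl) <;> assumption
    · rintro a' rfl <;> assumption
  · exact e6
  · rw [Set.inter_comm]; exact e5
  · rw [hset]; exact hsub
  · rw [hset]; exact hR
  · rw [hset]; exact hB
  · intro x hx
    have := hemp x hx
    unfold QuadInterior at this ⊢
    rw [quadBdry_rot]
    exact this

lemma quad_rev {R B : Finset ℂ} {a b c d : ℂ} (h : IsBalanced4Hole R B a b c d) :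
    IsBalanced4Hole R B d c b a := by
  obtain ⟨⟨hpw, e1, e2, e3, e4, e5, e6⟩, hsub, hR, hB, hemp⟩ := h
  have hset : ({d, c, b, a} : Set ℂ) = ({a, b, c, d} : Set ℂ) := by
    ext x; simp only [Set.mem_insert_iff, Set.mem_singleton_iff]; tauto
  refine ⟨⟨?_, ?_, ?_, ?_, ?_, ?_, ?_⟩, ?_, ?_, ?_, ?_⟩
  · have hpw' := hpw
    simp only [List.pairwise_cons, List.mem_cons, List.not_mem_nil, or_false,
      List.mem_singleton, ne_eq] at hpw' ⊢
    obtain ⟨h1', h2', h3', -⟩ := hpw'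
    have nab : a ≠ b := h1' b (Or.inl rfl)
    have nac : a ≠ c := h1' c (Or.inr (Or.inl rfl))
    have nad : a ≠ d := h1' d (Or.inr (Or.inr rfl))
    have nbc : b ≠ c := h2' c (Or.inl rfl)
    have nbd : b ≠ d := h2' d (Or.inr rfl)
    have ncd : c ≠ d := h3' d rfl
    have nba := nab.symm; have nca := nac.symm; have nda := nad.symm
    have ncb := nbc.symm; have ndb := nbd.symm; have ndc := ncd.symm
    refine ⟨?_, ?_, ?_, fun a' h' => absurd h' not_false, List.Pairwise.nil⟩
    · rintro a' (rfl | rfl | rfl) <;> assumption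
    · rintro a' (rfl | rfl) <;> assumption
    · rintro a' rfl <;> assumption
  · rw [segment_symm ℝ d c, segment_symm ℝ c b, Set.inter_comm]; exact e2
  · rw [segment_symm ℝ c b, segment_symm ℝ b a, Set.inter_comm]; exact e1
  · rw [segment_symm ℝ b a, segment_symm ℝ a d, Set.inter_comm]; exact e4
  · rw [segment_symm ℝ a d, segment_symm ℝ d c, Set.inter_comm]; exact e3
  · rw [segment_symm ℝ d c, segment_symm ℝ b a, Set.inter_comm]
    exact e5
  · rw [segment_symm ℝ c b, segment_symm ℝ a d]
    exact e6
  · rw [hset]; exact hsub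
  · rw [hset]; exact hR
  · rw [hset]; exact hB
  · intro x hx
    have := hemp x hx
    unfold QuadInterior at this ⊢
    rw [quadBdry_rev]
    exact this

lemma Dt_swap12 (a b c : ℂ) : Dt a b c = - Dt b a c := by simp [Dt]; ring

lemma Dt_mid (u v x y : ℂ) :
    Dt u v (((1:ℝ)/2) • x + ((1:ℝ)/2) • y) = (Dt u v x + Dt u v y) / 2 := by
  simp only [Dt, Complex.add_re, Complex.add_im, Complex.smul_re, Complex.smul_im,
    smul_eq_mul, Complex.sub_re, Complex.sub_im]
  ring

lemma disj_elim {A B' : Set ℂ} (h : A ∩ B' = ∅) {y : ℂ} (ha : y ∈ A) (hb : y ∈ B') : False :=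
  Set.notMem_empty y (h ▸ (⟨ha, hb⟩ : y ∈ A ∩ B'))

lemma gen_pos_Dt_ne {R B : Finset ℂ} (hgp : GenPos (↑R ∪ ↑B : Set ℂ)) {x y w : ℂ}
    (hx : x ∈ (↑R ∪ ↑B : Set ℂ)) (hy : y ∈ (↑R ∪ ↑B : Set ℂ)) (hw : w ∈ (↑R ∪ ↑B : Set ℂ))
    (hxy : x ≠ y) (hxw : x ≠ w) (hyw : y ≠ w) : Dt x y w ≠ 0 :=
  fun h0 => hgp x hx y hy w hw hxy hxw hyw (Dt_to_collinear h0)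

lemma eq_or_eq_of_Dt_eq_zero {R B : Finset ℂ} (hgp : GenPos (↑R ∪ ↑B : Set ℂ)) {x y w : ℂ}
    (hx : x ∈ (↑R ∪ ↑B : Set ℂ)) (hy : y ∈ (↑R ∪ ↑B : Set ℂ)) (hw : w ∈ (↑R ∪ ↑B : Set ℂ))
    (hxy : x ≠ y) (h : Dt x y w = 0) : w = x ∨ w = y := by
  by_contra h'
  push_neg at h'
  exact hgp x hx y hy w hw hxy (Ne.symm h'.1) (Ne.symm h'.2) (Dt_to_collinear h)

lemma quadA_balanced {R B : Finset ℂ} (hgp : GenPos (↑R ∪ ↑B : Set ℂ))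
    {t0 t1 t2 z : ℂ}
    (ht0S : t0 ∈ (↑R ∪ ↑B : Set ℂ)) (ht1S : t1 ∈ (↑R ∪ ↑B : Set ℂ))
    (ht2S : t2 ∈ (↑R ∪ ↑B : Set ℂ)) (hzS : z ∈ (↑R ∪ ↑B : Set ℂ))
    (ho : 0 < Dt t0 t1 t2)
    (hz1 : 0 < Dt t0 t1 z) (hz2 : 0 < Dt t1 t2 z) (hz3 : 0 < Dt t2 t0 z)
    (hsub : ({t0, t1, z, t2} : Set ℂ) ⊆ (↑R ∪ ↑B : Set ℂ))
    (hR2 : (({t0, t1, z, t2} : Set ℂ) ∩ ↑R).ncard = 2)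
    (hB2 : (({t0, t1, z, t2} : Set ℂ) ∩ ↑B).ncard = 2)
    (hInt : ∀ x ∈ (↑R ∪ ↑B : Set ℂ), 0 < Dt t0 t1 x → 0 < Dt t1 t2 x → 0 < Dt t2 t0 x →
      x = z ∨ (0 < Dt t2 z x ∧ Dt t1 z x < 0)) :
    IsBalanced4Hole R B t0 t1 z t2 := by
  obtain ⟨h01, h02, h12⟩ := Dt_distinct (ne_of_gt ho)
  obtain ⟨-, h0z, h1z⟩ := Dt_distinct (ne_of_gt hz1)
  obtain ⟨-, -, h2z⟩ := Dt_distinct (ne_of_gt hz2)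
  -- useful determinant conversions
  have e120 : Dt t1 t2 t0 = Dt t0 t1 t2 := (Dt_cyc t0 t1 t2).symm
  have e201 : Dt t2 t0 t1 = Dt t0 t1 t2 := Dt_cyc t2 t0 t1
  have ez12 : Dt z t1 t2 = Dt t1 t2 z := Dt_cyc z t1 t2
  have e2z1 : Dt t2 z t1 = Dt t1 t2 z := (Dt_cyc t2 z t1).trans ez12
  have hsimple : IsSimpleQuad t0 t1 z t2 := by
    apply core_simple hz1
    · rw [show Dt t0 z t2 = Dt t2 t0 z from by rw [Dt_cyc, Dt_cyc]]
      exact hz3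
    · exact gen_pos_Dt_ne hgp ht1S hzS ht2S h1z h12 (Ne.symm h2z)
    · exact ho
    · exact hz3
  refine ⟨hsimple, hsub, hR2, hB2, ?_⟩
  intro x hxS
  rcases lt_trichotomy (Dt t0 t1 x) 0 with hc1 | hc1 | hc1
  · exact notMem_quadInterior_of_neg h01 (Dt_left t0 t1).ge (Dt_self t0 t1).ge hz1.le ho.le hc1
  · rcases eq_or_eq_of_Dt_eq_zero hgp ht0S ht1S hxS h01 hc1 with rfl | rfl
    · exact notMem_quadInterior_of_mem_bdry (vertex_mem_quadBdry₁ _ _ _ _)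
    · exact notMem_quadInterior_of_mem_bdry (vertex_mem_quadBdry₂ _ _ _ _)
  rcases lt_trichotomy (Dt t1 t2 x) 0 with hc2 | hc2 | hc2
  · refine notMem_quadInterior_of_neg h12 ?_ (Dt_left t1 t2).ge hz2.le (Dt_self t1 t2).ge hc2
    rw [e120]; exact ho.le
  · rcases eq_or_eq_of_Dt_eq_zero hgp ht1S ht2S hxS h12 hc2 with rfl | rfl
    · exact notMem_quadInterior_of_mem_bdry (vertex_mem_quadBdry₂ _ _ _ _)
    · exact notMem_quadInterior_of_mem_bdry (vertex_mem_quadBdry₄ _ _ _ _)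
  rcases lt_trichotomy (Dt t2 t0 x) 0 with hc3 | hc3 | hc3
  · refine notMem_quadInterior_of_neg (Ne.symm h02) (Dt_self t2 t0).ge ?_ hz3.le
      (Dt_left t2 t0).ge hc3
    rw [e201]; exact ho.le
  · rcases eq_or_eq_of_Dt_eq_zero hgp ht2S ht0S hxS (Ne.symm h02) hc3 with rfl | rfl
    · exact notMem_quadInterior_of_mem_bdry (vertex_mem_quadBdry₄ _ _ _ _)
    · exact notMem_quadInterior_of_mem_bdry (vertex_mem_quadBdry₁ _ _ _ _)
  rcases hInt x hxS hc1 hc2 hc3 with rfl | ⟨hn1, hn2⟩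
  · exact notMem_quadInterior_of_mem_bdry (vertex_mem_quadBdry₃ _ _ _ _)
  · -- x is in the notch; escape through the gate edge (t1, t2)
    apply notMem_quadInterior_of_gate (u := t1) (v := t2) h12
    · rw [e120]; exact ho.le
    · exact (Dt_left t1 t2).ge
    · exact hz2.le
    · exact (Dt_self t1 t2).ge
    · exact hc2
    · intro y hy hybd
      rcases hybd with ((hE | hE) | hE) | hE
      · -- edge t0 t1, functional Dt t0 t1
        refine disj_elim (seg_disj (le_of_eq (Dt_left t0 t1)) (le_of_eq (Dt_self t0 t1))
          hc1 ?_) hE hy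
        rw [Dt_mid, Dt_self]
        linarith
      · -- edge t1 z, functional Dt z t1
        have hx' : 0 < Dt z t1 x := by rw [Dt_swap12]; linarith
        have hm' : 0 < Dt z t1 (((1:ℝ)/2) • t1 + ((1:ℝ)/2) • t2) := by
          rw [Dt_mid, Dt_self, ez12]
          linarith
        refine disj_elim (seg_disj (le_of_eq (Dt_self z t1)) (le_of_eq (Dt_left z t1))
          hx' hm') hE hy
      · -- edge z t2, functional Dt t2 z
        have hm' : 0 < Dt t2 z (((1:ℝ)/2) • t1 + ((1:ℝ)/2) • t2) := by
          rw [Dt_mid, Dt_left, e2z1]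
          linarith
        refine disj_elim (seg_disj (le_of_eq (Dt_self t2 z)) (le_of_eq (Dt_left t2 z))
          hn1 hm') hE hy
      · -- edge t2 t0, functional Dt t2 t0
        have hm' : 0 < Dt t2 t0 (((1:ℝ)/2) • t1 + ((1:ℝ)/2) • t2) := by
          rw [Dt_mid, Dt_left, e201]
          linarith
        refine disj_elim (seg_disj (le_of_eq (Dt_left t2 t0)) (le_of_eq (Dt_self t2 t0))
          hc3 hm') hE hy

lemma Dt_combo3 {w0 w1 w2 : ℝ} (h : w0 + w1 + w2 = 1) (v0 v1 v2 p q : ℂ) :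
    Dt (w0 • v0 + w1 • v1 + w2 • v2) p q
      = w0 * Dt v0 p q + w1 * Dt v1 p q + w2 * Dt v2 p q := by
  have hw : w2 = 1 - w0 - w1 := by linarith
  subst hw
  simp only [Dt, Complex.add_re, Complex.add_im, Complex.smul_re, Complex.smul_im,
    smul_eq_mul, Complex.sub_re, Complex.sub_im]
  ring

lemma combo_shift {w0 w1 w2 : ℝ} (h : w0 + w1 + w2 = 1) (a b c : ℂ) :
    w0 • a + w1 • b + w2 • c = a + w1 • (b - a) + w2 • (c - a) := by
  have hw : w0 = 1 - w1 - w2 := by linarith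
  subst hw
  module

/-- Cramer-style barycentric data for a point with positive orientation basis. -/
lemma bary_rep {t0 t1 t2 : ℂ} (ho : 0 < Dt t0 t1 t2) (x : ℂ) :
    ∃ w0 w1 w2 : ℝ, w0 + w1 + w2 = 1 ∧
      x = w0 • t0 + w1 • t1 + w2 • t2 ∧
      w0 * Dt t0 t1 t2 = Dt t1 t2 x ∧
      w1 * Dt t0 t1 t2 = Dt t2 t0 x ∧
      w2 * Dt t0 t1 t2 = Dt t0 t1 x := by
  have hne := ne_of_gt ho
  refine ⟨Dt x t1 t2 / Dt t0 t1 t2, Dt t0 x t2 / Dt t0 t1 t2, Dt t0 t1 x / Dt t0 t1 t2,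
    ?_, Dt_cramer hne x, ?_, ?_, ?_⟩
  · field_simp
    linarith [Dt_sum t0 t1 t2 x]
  · rw [div_mul_cancel₀ _ hne, Dt_cyc]
  · rw [div_mul_cancel₀ _ hne]
    rw [show Dt t0 x t2 = Dt t2 t0 x from by rw [Dt_cyc, Dt_cyc]]
  · rw [div_mul_cancel₀ _ hne]

lemma openTri_comm (a b c : ℂ) : openTriangle a b c = openTriangle a c b := by
  unfold openTriangle
  rw [show ({a, b, c} : Set ℂ) = ({a, c, b} : Set ℂ) from by
    ext x; simp only [Set.mem_insert_iff, Set.mem_singleton_iff]; tauto]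

/-- trichotomy: w lies in notch N2, N3, or N1 around z -/
lemma notch_trichotomy {t0 t1 t2 z w : ℂ} (ho : 0 < Dt t0 t1 t2)
    (hz1 : 0 < Dt t0 t1 z) (hz2 : 0 < Dt t1 t2 z) (hz3 : 0 < Dt t2 t0 z)
    (hs0 : Dt t0 z w ≠ 0) (hs1 : Dt t1 z w ≠ 0) (hs2 : Dt t2 z w ≠ 0) :
    (0 < Dt t2 z w ∧ Dt t1 z w < 0) ∨ (0 < Dt t0 z w ∧ Dt t2 z w < 0) ∨
      (0 < Dt t1 z w ∧ Dt t0 z w < 0) := by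
  obtain ⟨w0, w1, w2, hsum, hrep, e0, e1, e2⟩ := bary_rep ho z
  have hw0 : 0 < w0 := by
    have : 0 < w0 * Dt t0 t1 t2 := by rw [e0]; exact hz2
    nlinarith
  have hw1 : 0 < w1 := by
    have : 0 < w1 * Dt t0 t1 t2 := by rw [e1]; exact hz3
    nlinarith
  have hw2 : 0 < w2 := by
    have : 0 < w2 * Dt t0 t1 t2 := by rw [e2]; exact hz1
    nlinarith
  have hkey : w0 * Dt t0 z w + w1 * Dt t1 z w + w2 * Dt t2 z w = 0 := by
    have := Dt_combo3 hsum t0 t1 t2 z w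
    rw [← hrep, Dt_self'] at this
    linarith
  rcases hs0.lt_or_gt with s0 | s0 <;> rcases hs1.lt_or_gt with s1 | s1 <;>
    rcases hs2.lt_or_gt with s2 | s2
  · exfalso
    nlinarith [mul_pos hw0 (neg_pos.2 s0), mul_pos hw1 (neg_pos.2 s1),
      mul_pos hw2 (neg_pos.2 s2)]
  · exact Or.inl ⟨s2, s1⟩
  · exact Or.inr (Or.inr ⟨s1, s0⟩)
  · exact Or.inr (Or.inr ⟨s1, s0⟩)
  · exact Or.inr (Or.inl ⟨s0, s2⟩)
  · exact Or.inl ⟨s2, s1⟩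
  · exact Or.inr (Or.inl ⟨s0, s2⟩)
  · exfalso
    nlinarith [mul_pos hw0 s0, mul_pos hw1 s1, mul_pos hw2 s2]

/-- interior points of the basis triangle that belong to `S` are red points of `P` -/
lemma interior_to_P {R B : Finset ℂ} {t0 t1 t2 : ℂ}
    (ht1B : t1 ∈ B) (ht2B : t2 ∈ B)
    (ho : 0 < Dt t0 t1 t2)
    (hcons : ∀ x ∈ B, (x : ℂ) ∉ wedge t0 t1 t2) :
    ∀ x ∈ (↑R ∪ ↑B : Set ℂ), 0 < Dt t0 t1 x → 0 < Dt t1 t2 x → 0 < Dt t2 t0 x →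
      x ∈ (↑R : Set ℂ) ∩ openTriangle t0 t1 t2 := by
  intro x hxS c1 c2 c3
  have hxT : x ∈ openTriangle t0 t1 t2 := (mem_openTri_pos ho x).2 ⟨c1, c2, c3⟩
  have hxwedge : x ∈ wedge t0 t1 t2 := by
    obtain ⟨w0, w1, w2, hsum, hrep, e0, e1, e2⟩ := bary_rep ho x
    have hw1 : 0 < w1 := by nlinarith
    have hw2 : 0 < w2 := by nlinarith
    exact ⟨w1, w2, hw1, hw2, by rw [hrep, combo_shift hsum]⟩
  rcases hxS with hxR | hxB
  · exact ⟨hxR, hxT⟩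
  · exact absurd hxwedge (hcons x (by exact_mod_cast hxB))

lemma ncard2_of_eq_pair {s X : Set ℂ} {x y : ℂ} (h : s ∩ X = {x, y}) (hxy : x ≠ y) :
    (s ∩ X).ncard = 2 := by rw [h]; exact Set.ncard_pair hxy

lemma wedge_comm (a b c : ℂ) : wedge a b c = wedge a c b := by
  ext x
  constructor <;>
  · rintro ⟨s, t, hs, ht, he⟩
    exact ⟨t, s, ht, hs, by rw [he]; module⟩

/-- engine, first variant: produces a hole of form A or B (both contain edge t0 t1
  and edge t2 t0). -/
lemma main_engineAB {R B : Finset ℂ} (hdisj : Disjoint R B) (hgp : GenPos (↑R ∪ ↑B : Set ℂ))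
    {t0 t1 t2 : ℂ} (ht0 : t0 ∈ R) (ht1 : t1 ∈ B) (ht2 : t2 ∈ B)
    (ho : 0 < Dt t0 t1 t2)
    (hcons : ∀ x ∈ B, (x : ℂ) ∉ wedge t0 t1 t2)
    (htri1 : 1 ≤ ((↑R : Set ℂ) ∩ openTriangle t0 t1 t2).ncard)
    (htri2 : ((↑R : Set ℂ) ∩ openTriangle t0 t1 t2).ncard ≤ 2) :
    ∃ z : ℂ, IsBalanced4Hole R B t0 t1 z t2 ∨ IsBalanced4Hole R B t1 t2 z t0 := by
  classical
  set S : Set ℂ := (↑R ∪ ↑B : Set ℂ) with hS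
  set P : Set ℂ := (↑R : Set ℂ) ∩ openTriangle t0 t1 t2 with hP
  have ht0S : t0 ∈ S := Or.inl (Finset.mem_coe.2 ht0)
  have ht1S : t1 ∈ S := Or.inr (Finset.mem_coe.2 ht1)
  have ht2S : t2 ∈ S := Or.inr (Finset.mem_coe.2 ht2)
  have hBnotR : ∀ x : ℂ, x ∈ B → x ∉ R := fun x hx hx' => Finset.disjoint_left.1 hdisj hx' hx
  have ht0nB : t0 ∉ B := fun h => hBnotR t0 h ht0
  have ht1nR : t1 ∉ R := hBnotR t1 ht1
  have ht2nR : t2 ∉ R := hBnotR t2 ht2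
  have hinterior := interior_to_P (R := R) ht1 ht2 ho hcons
  have hPmem : ∀ p ∈ P, p ∈ R ∧ p ∉ B ∧ p ∈ S ∧
      0 < Dt t0 t1 p ∧ 0 < Dt t1 t2 p ∧ 0 < Dt t2 t0 p := by
    intro p hp
    obtain ⟨hpR, hpT⟩ := hp
    have hpR' : p ∈ R := Finset.mem_coe.1 hpR
    obtain ⟨c1, c2, c3⟩ := (mem_openTri_pos ho p).1 hpT
    exact ⟨hpR', fun h => hBnotR p h hpR', Or.inl hpR, c1, c2, c3⟩
  -- builders
  have mkA : ∀ z : ℂ, z ∈ P →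
      (∀ x ∈ P, x = z ∨ (0 < Dt t2 z x ∧ Dt t1 z x < 0)) →
      IsBalanced4Hole R B t0 t1 z t2 := by
    intro z hzP hNotch
    obtain ⟨hzR, hznB, hzS, hz1, hz2, hz3⟩ := hPmem z hzP
    obtain ⟨h01, h0z, h1z⟩ := Dt_distinct (ne_of_gt hz1)
    obtain ⟨h12, -, h2z⟩ := Dt_distinct (ne_of_gt hz2)
    obtain ⟨h20, -, h0z'⟩ := Dt_distinct (ne_of_gt hz3)
    apply quadA_balanced hgp ht0S ht1S ht2S hzS ho hz1 hz2 hz3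
    · rintro x (rfl | rfl | rfl | rfl)
      exacts [ht0S, ht1S, hzS, ht2S]
    · refine ncard2_of_eq_pair (x := t0) (y := z) ?_ h0z
      ext u
      simp only [Set.mem_inter_iff, Set.mem_insert_iff, Set.mem_singleton_iff,
        Finset.coe_insert, Finset.mem_coe]
      constructor
      · rintro ⟨rfl | rfl | rfl | rfl, hu⟩ <;> tauto
      · rintro (rfl | rfl) <;> tauto
    · refine ncard2_of_eq_pair (x := t1) (y := t2) ?_ h12
      ext u
      simp only [Set.mem_inter_iff, Set.mem_insert_iff, Set.mem_singleton_iff,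
        Finset.coe_insert, Finset.mem_coe]
      constructor
      · rintro ⟨rfl | rfl | rfl | rfl, hu⟩ <;> tauto
      · rintro (rfl | rfl) <;> tauto
    · intro x hx c1 c2 c3
      exact hNotch x (hinterior x hx c1 c2 c3)
  have mkB : ∀ z : ℂ, z ∈ P →
      (∀ x ∈ P, x = z ∨ (0 < Dt t0 z x ∧ Dt t2 z x < 0)) →
      IsBalanced4Hole R B t1 t2 z t0 := by
    intro z hzP hNotch
    obtain ⟨hzR, hznB, hzS, hz1, hz2, hz3⟩ := hPmem z hzP
    obtain ⟨h01, h0z, h1z⟩ := Dt_distinct (ne_of_gt hz1)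
    obtain ⟨h12, -, h2z⟩ := Dt_distinct (ne_of_gt hz2)
    obtain ⟨h20, -, -⟩ := Dt_distinct (ne_of_gt hz3)
    have ho' : 0 < Dt t1 t2 t0 := by rw [← Dt_cyc]; exact ho
    apply quadA_balanced hgp ht1S ht2S ht0S hzS ho' hz2 hz3 hz1
    · rintro x (rfl | rfl | rfl | rfl)
      exacts [ht1S, ht2S, hzS, ht0S]
    · refine ncard2_of_eq_pair (x := z) (y := t0) ?_ (Ne.symm h0z)
      ext u
      simp only [Set.mem_inter_iff, Set.mem_insert_iff, Set.mem_singleton_iff,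
        Finset.coe_insert, Finset.mem_coe]
      constructor
      · rintro ⟨rfl | rfl | rfl | rfl, hu⟩ <;> tauto
      · rintro (rfl | rfl) <;> tauto
    · refine ncard2_of_eq_pair (x := t1) (y := t2) ?_ h12
      ext u
      simp only [Set.mem_inter_iff, Set.mem_insert_iff, Set.mem_singleton_iff,
        Finset.coe_insert, Finset.mem_coe]
      constructor
      · rintro ⟨rfl | rfl | rfl | rfl, hu⟩ <;> tauto
      · rintro (rfl | rfl) <;> tauto
    · intro x hx c1 c2 c3
      exact hNotch x (hinterior x hx c3 c1 c2)
  have mkC : ∀ z : ℂ, z ∈ P →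
      (∀ x ∈ P, x = z ∨ (0 < Dt t1 z x ∧ Dt t0 z x < 0)) →
      IsBalanced4Hole R B t2 t0 z t1 := by
    intro z hzP hNotch
    obtain ⟨hzR, hznB, hzS, hz1, hz2, hz3⟩ := hPmem z hzP
    obtain ⟨h01, h0z, h1z⟩ := Dt_distinct (ne_of_gt hz1)
    obtain ⟨h12, -, h2z⟩ := Dt_distinct (ne_of_gt hz2)
    obtain ⟨h20, -, -⟩ := Dt_distinct (ne_of_gt hz3)
    have ho' : 0 < Dt t2 t0 t1 := by rw [Dt_cyc t2 t0 t1]; exact ho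
    apply quadA_balanced hgp ht2S ht0S ht1S hzS ho' hz3 hz1 hz2
    · rintro x (rfl | rfl | rfl | rfl)
      exacts [ht2S, ht0S, hzS, ht1S]
    · refine ncard2_of_eq_pair (x := t0) (y := z) ?_ h0z
      ext u
      simp only [Set.mem_inter_iff, Set.mem_insert_iff, Set.mem_singleton_iff,
        Finset.coe_insert, Finset.mem_coe]
      constructor
      · rintro ⟨rfl | rfl | rfl | rfl, hu⟩ <;> tauto
      · rintro (rfl | rfl) <;> tauto
    · refine ncard2_of_eq_pair (x := t2) (y := t1) ?_ (Ne.symm h12)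
      ext u
      simp only [Set.mem_inter_iff, Set.mem_insert_iff, Set.mem_singleton_iff,
        Finset.coe_insert, Finset.mem_coe]
      constructor
      · rintro ⟨rfl | rfl | rfl | rfl, hu⟩ <;> tauto
      · rintro (rfl | rfl) <;> tauto
    · intro x hx c1 c2 c3
      exact hNotch x (hinterior x hx c2 c3 c1)
  -- case on the number of interior red points
  have hcases : P.ncard = 1 ∨ P.ncard = 2 := by omega
  rcases hcases with h1 | h2
  · obtain ⟨z, hPz⟩ := Set.ncard_eq_one.1 h1
    refine ⟨z, Or.inl (mkA z (hPz ▸ rfl) ?_)⟩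
    intro x hx
    rw [hPz] at hx
    exact Or.inl hx
  · obtain ⟨p, q, hpq, hPz⟩ := Set.ncard_eq_two.1 h2
    have hpP : p ∈ P := hPz ▸ Set.mem_insert p {q}
    have hqP : q ∈ P := hPz ▸ Set.mem_insert_of_mem p rfl
    obtain ⟨hpR, hpnB, hpS, hp1, hp2, hp3⟩ := hPmem p hpP
    obtain ⟨hqR, hqnB, hqS, hq1, hq2, hq3⟩ := hPmem q hqP
    obtain ⟨-, h0p, -⟩ := Dt_distinct (ne_of_gt hp1)
    obtain ⟨-, -, h2p⟩ := Dt_distinct (ne_of_gt hp2)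
    have h1p : t1 ≠ p := (Dt_distinct (ne_of_gt hp1)).2.2
    obtain ⟨-, h0q, -⟩ := Dt_distinct (ne_of_gt hq1)
    obtain ⟨-, -, h2q⟩ := Dt_distinct (ne_of_gt hq2)
    have h1q : t1 ≠ q := (Dt_distinct (ne_of_gt hq1)).2.2
    have hs0 : Dt t0 p q ≠ 0 := gen_pos_Dt_ne hgp ht0S hpS hqS h0p h0q hpq
    have hs1 : Dt t1 p q ≠ 0 := gen_pos_Dt_ne hgp ht1S hpS hqS h1p h1q hpq
    have hs2 : Dt t2 p q ≠ 0 := gen_pos_Dt_ne hgp ht2S hpS hqS h2p h2q hpq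
    have memP : ∀ x ∈ P, x = p ∨ x = q := by
      intro x hx; rw [hPz] at hx; exact hx
    have swap0 : Dt t0 q p = - Dt t0 p q := by rw [Dt_swap]
    have swap1 : Dt t1 q p = - Dt t1 p q := by rw [Dt_swap]
    have swap2 : Dt t2 q p = - Dt t2 p q := by rw [Dt_swap]
    rcases notch_trichotomy ho hp1 hp2 hp3 hs0 hs1 hs2 with hN2 | hN3 | hN1
    · refine ⟨p, Or.inl (mkA p hpP ?_)⟩
      intro x hx
      rcases memP x hx with rfl | rfl
      · exact Or.inl rfl
      · exact Or.inr hN2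
    · refine ⟨p, Or.inr (mkB p hpP ?_)⟩
      intro x hx
      rcases memP x hx with rfl | rfl
      · exact Or.inl rfl
      · exact Or.inr hN3
    · -- N1 for p: swap to center q
      rcases hs2.lt_or_gt with s2 | s2
      · -- σ2 < 0 : q-centered N2
        refine ⟨q, Or.inl (mkA q hqP ?_)⟩
        intro x hx
        rcases memP x hx with rfl | rfl
        · refine Or.inr ⟨by rw [swap2]; linarith, by rw [swap1]; linarith [hN1.1]⟩
        · exact Or.inl rfl
      · -- σ2 > 0 : q-centered N3
        refine ⟨q, Or.inr (mkB q hqP ?_)⟩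
        intro x hx
        rcases memP x hx with rfl | rfl
        · refine Or.inr ⟨by rw [swap0]; linarith [hN1.2], by rw [swap2]; linarith⟩
        · exact Or.inl rfl

/-- engine, second variant: produces a hole of form A or C (both contain edge t0 t1
  and edge t1 ... t2 t0 side). -/
lemma main_engineAC {R B : Finset ℂ} (hdisj : Disjoint R B) (hgp : GenPos (↑R ∪ ↑B : Set ℂ))
    {t0 t1 t2 : ℂ} (ht0 : t0 ∈ R) (ht1 : t1 ∈ B) (ht2 : t2 ∈ B)
    (ho : 0 < Dt t0 t1 t2)
    (hcons : ∀ x ∈ B, (x : ℂ) ∉ wedge t0 t1 t2)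
    (htri1 : 1 ≤ ((↑R : Set ℂ) ∩ openTriangle t0 t1 t2).ncard)
    (htri2 : ((↑R : Set ℂ) ∩ openTriangle t0 t1 t2).ncard ≤ 2) :
    ∃ z : ℂ, IsBalanced4Hole R B t0 t1 z t2 ∨ IsBalanced4Hole R B t2 t0 z t1 := by
  classical
  set S : Set ℂ := (↑R ∪ ↑B : Set ℂ) with hS
  set P : Set ℂ := (↑R : Set ℂ) ∩ openTriangle t0 t1 t2 with hP
  have ht0S : t0 ∈ S := Or.inl (Finset.mem_coe.2 ht0)
  have ht1S : t1 ∈ S := Or.inr (Finset.mem_coe.2 ht1)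
  have ht2S : t2 ∈ S := Or.inr (Finset.mem_coe.2 ht2)
  have hBnotR : ∀ x : ℂ, x ∈ B → x ∉ R := fun x hx hx' => Finset.disjoint_left.1 hdisj hx' hx
  have ht0nB : t0 ∉ B := fun h => hBnotR t0 h ht0
  have ht1nR : t1 ∉ R := hBnotR t1 ht1
  have ht2nR : t2 ∉ R := hBnotR t2 ht2
  have hinterior := interior_to_P (R := R) ht1 ht2 ho hcons
  have hPmem : ∀ p ∈ P, p ∈ R ∧ p ∉ B ∧ p ∈ S ∧
      0 < Dt t0 t1 p ∧ 0 < Dt t1 t2 p ∧ 0 < Dt t2 t0 p := by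
    intro p hp
    obtain ⟨hpR, hpT⟩ := hp
    have hpR' : p ∈ R := Finset.mem_coe.1 hpR
    obtain ⟨c1, c2, c3⟩ := (mem_openTri_pos ho p).1 hpT
    exact ⟨hpR', fun h => hBnotR p h hpR', Or.inl hpR, c1, c2, c3⟩
  -- builders
  have mkA : ∀ z : ℂ, z ∈ P →
      (∀ x ∈ P, x = z ∨ (0 < Dt t2 z x ∧ Dt t1 z x < 0)) →
      IsBalanced4Hole R B t0 t1 z t2 := by
    intro z hzP hNotch
    obtain ⟨hzR, hznB, hzS, hz1, hz2, hz3⟩ := hPmem z hzP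
    obtain ⟨h01, h0z, h1z⟩ := Dt_distinct (ne_of_gt hz1)
    obtain ⟨h12, -, h2z⟩ := Dt_distinct (ne_of_gt hz2)
    obtain ⟨h20, -, h0z'⟩ := Dt_distinct (ne_of_gt hz3)
    apply quadA_balanced hgp ht0S ht1S ht2S hzS ho hz1 hz2 hz3
    · rintro x (rfl | rfl | rfl | rfl)
      exacts [ht0S, ht1S, hzS, ht2S]
    · refine ncard2_of_eq_pair (x := t0) (y := z) ?_ h0z
      ext u
      simp only [Set.mem_inter_iff, Set.mem_insert_iff, Set.mem_singleton_iff,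
        Finset.coe_insert, Finset.mem_coe]
      constructor
      · rintro ⟨rfl | rfl | rfl | rfl, hu⟩ <;> tauto
      · rintro (rfl | rfl) <;> tauto
    · refine ncard2_of_eq_pair (x := t1) (y := t2) ?_ h12
      ext u
      simp only [Set.mem_inter_iff, Set.mem_insert_iff, Set.mem_singleton_iff,
        Finset.coe_insert, Finset.mem_coe]
      constructor
      · rintro ⟨rfl | rfl | rfl | rfl, hu⟩ <;> tauto
      · rintro (rfl | rfl) <;> tauto
    · intro x hx c1 c2 c3
      exact hNotch x (hinterior x hx c1 c2 c3)
  have mkB : ∀ z : ℂ, z ∈ P →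
      (∀ x ∈ P, x = z ∨ (0 < Dt t0 z x ∧ Dt t2 z x < 0)) →
      IsBalanced4Hole R B t1 t2 z t0 := by
    intro z hzP hNotch
    obtain ⟨hzR, hznB, hzS, hz1, hz2, hz3⟩ := hPmem z hzP
    obtain ⟨h01, h0z, h1z⟩ := Dt_distinct (ne_of_gt hz1)
    obtain ⟨h12, -, h2z⟩ := Dt_distinct (ne_of_gt hz2)
    obtain ⟨h20, -, -⟩ := Dt_distinct (ne_of_gt hz3)
    have ho' : 0 < Dt t1 t2 t0 := by rw [← Dt_cyc]; exact ho
    apply quadA_balanced hgp ht1S ht2S ht0S hzS ho' hz2 hz3 hz1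
    · rintro x (rfl | rfl | rfl | rfl)
      exacts [ht1S, ht2S, hzS, ht0S]
    · refine ncard2_of_eq_pair (x := z) (y := t0) ?_ (Ne.symm h0z)
      ext u
      simp only [Set.mem_inter_iff, Set.mem_insert_iff, Set.mem_singleton_iff,
        Finset.coe_insert, Finset.mem_coe]
      constructor
      · rintro ⟨rfl | rfl | rfl | rfl, hu⟩ <;> tauto
      · rintro (rfl | rfl) <;> tauto
    · refine ncard2_of_eq_pair (x := t1) (y := t2) ?_ h12
      ext u
      simp only [Set.mem_inter_iff, Set.mem_insert_iff, Set.mem_singleton_iff,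
        Finset.coe_insert, Finset.mem_coe]
      constructor
      · rintro ⟨rfl | rfl | rfl | rfl, hu⟩ <;> tauto
      · rintro (rfl | rfl) <;> tauto
    · intro x hx c1 c2 c3
      exact hNotch x (hinterior x hx c3 c1 c2)
  have mkC : ∀ z : ℂ, z ∈ P →
      (∀ x ∈ P, x = z ∨ (0 < Dt t1 z x ∧ Dt t0 z x < 0)) →
      IsBalanced4Hole R B t2 t0 z t1 := by
    intro z hzP hNotch
    obtain ⟨hzR, hznB, hzS, hz1, hz2, hz3⟩ := hPmem z hzP
    obtain ⟨h01, h0z, h1z⟩ := Dt_distinct (ne_of_gt hz1)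
    obtain ⟨h12, -, h2z⟩ := Dt_distinct (ne_of_gt hz2)
    obtain ⟨h20, -, -⟩ := Dt_distinct (ne_of_gt hz3)
    have ho' : 0 < Dt t2 t0 t1 := by rw [Dt_cyc t2 t0 t1]; exact ho
    apply quadA_balanced hgp ht2S ht0S ht1S hzS ho' hz3 hz1 hz2
    · rintro x (rfl | rfl | rfl | rfl)
      exacts [ht2S, ht0S, hzS, ht1S]
    · refine ncard2_of_eq_pair (x := t0) (y := z) ?_ h0z
      ext u
      simp only [Set.mem_inter_iff, Set.mem_insert_iff, Set.mem_singleton_iff,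
        Finset.coe_insert, Finset.mem_coe]
      constructor
      · rintro ⟨rfl | rfl | rfl | rfl, hu⟩ <;> tauto
      · rintro (rfl | rfl) <;> tauto
    · refine ncard2_of_eq_pair (x := t2) (y := t1) ?_ (Ne.symm h12)
      ext u
      simp only [Set.mem_inter_iff, Set.mem_insert_iff, Set.mem_singleton_iff,
        Finset.coe_insert, Finset.mem_coe]
      constructor
      · rintro ⟨rfl | rfl | rfl | rfl, hu⟩ <;> tauto
      · rintro (rfl | rfl) <;> tauto
    · intro x hx c1 c2 c3
      exact hNotch x (hinterior x hx c2 c3 c1)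
  -- case on the number of interior red points
  have hcases : P.ncard = 1 ∨ P.ncard = 2 := by omega
  rcases hcases with h1 | h2
  · obtain ⟨z, hPz⟩ := Set.ncard_eq_one.1 h1
    refine ⟨z, Or.inl (mkA z (hPz ▸ rfl) ?_)⟩
    intro x hx
    rw [hPz] at hx
    exact Or.inl hx
  · obtain ⟨p, q, hpq, hPz⟩ := Set.ncard_eq_two.1 h2
    have hpP : p ∈ P := hPz ▸ Set.mem_insert p {q}
    have hqP : q ∈ P := hPz ▸ Set.mem_insert_of_mem p rfl
    obtain ⟨hpR, hpnB, hpS, hp1, hp2, hp3⟩ := hPmem p hpP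
    obtain ⟨hqR, hqnB, hqS, hq1, hq2, hq3⟩ := hPmem q hqP
    obtain ⟨-, h0p, -⟩ := Dt_distinct (ne_of_gt hp1)
    obtain ⟨-, -, h2p⟩ := Dt_distinct (ne_of_gt hp2)
    have h1p : t1 ≠ p := (Dt_distinct (ne_of_gt hp1)).2.2
    obtain ⟨-, h0q, -⟩ := Dt_distinct (ne_of_gt hq1)
    obtain ⟨-, -, h2q⟩ := Dt_distinct (ne_of_gt hq2)
    have h1q : t1 ≠ q := (Dt_distinct (ne_of_gt hq1)).2.2
    have hs0 : Dt t0 p q ≠ 0 := gen_pos_Dt_ne hgp ht0S hpS hqS h0p h0q hpq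
    have hs1 : Dt t1 p q ≠ 0 := gen_pos_Dt_ne hgp ht1S hpS hqS h1p h1q hpq
    have hs2 : Dt t2 p q ≠ 0 := gen_pos_Dt_ne hgp ht2S hpS hqS h2p h2q hpq
    have memP : ∀ x ∈ P, x = p ∨ x = q := by
      intro x hx; rw [hPz] at hx; exact hx
    have swap0 : Dt t0 q p = - Dt t0 p q := by rw [Dt_swap]
    have swap1 : Dt t1 q p = - Dt t1 p q := by rw [Dt_swap]
    have swap2 : Dt t2 q p = - Dt t2 p q := by rw [Dt_swap]
    rcases notch_trichotomy ho hp1 hp2 hp3 hs0 hs1 hs2 with hN2 | hN3 | hN1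
    · refine ⟨p, Or.inl (mkA p hpP ?_)⟩
      intro x hx
      rcases memP x hx with rfl | rfl
      · exact Or.inl rfl
      · exact Or.inr hN2
    · -- N3 for p: swap to center q
      rcases hs1.lt_or_gt with s1 | s1
      · -- σ1 < 0 : q-centered N1
        refine ⟨q, Or.inr (mkC q hqP ?_)⟩
        intro x hx
        rcases memP x hx with rfl | rfl
        · refine Or.inr ⟨by rw [swap1]; linarith, by rw [swap0]; linarith [hN3.1]⟩
        · exact Or.inl rfl
      · -- σ1 > 0 : q-centered N2
        refine ⟨q, Or.inl (mkA q hqP ?_)⟩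
        intro x hx
        rcases memP x hx with rfl | rfl
        · refine Or.inr ⟨by rw [swap2]; linarith [hN3.2], by rw [swap1]; linarith⟩
        · exact Or.inl rfl
    · refine ⟨p, Or.inr (mkC p hpP ?_)⟩
      intro x hx
      rcases memP x hx with rfl | rfl
      · exact Or.inl rfl
      · exact Or.inr hN1

end Work

/-- if `r ∈ R`, `b, b' ∈ B` are consecutive in the radial order
around `r` (no blue point lies in `W(r,b,b')`), the wedge `W(r,b,b')` spans an
angle less than `π` (i.e. `r, b, b'` are not collinear), and the open triangle
`Δ r b b'` contains at least one and at most two red points, then `S` has a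
balanced 4-hole having the segment `r b` as an edge. -/
theorem stmt18 (R B : Finset ℂ) (hdisj : Disjoint R B)
    (hgp : GenPos (↑R ∪ ↑B : Set ℂ))
    (r b b' : ℂ) (hr : r ∈ R) (hb : b ∈ B) (hb' : b' ∈ B) (hbb' : b ≠ b')
    (hangle : ¬ Collinear ℝ ({r, b, b'} : Set ℂ))
    (hconsec : ∀ x ∈ B, (x : ℂ) ∉ wedge r b b')
    (htri1 : 1 ≤ ((↑R : Set ℂ) ∩ openTriangle r b b').ncard)
    (htri2 : ((↑R : Set ℂ) ∩ openTriangle r b b').ncard ≤ 2) :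
    ∃ c d : ℂ, IsBalanced4Hole R B r b c d := by
  have honeD : Dt r b b' ≠ 0 := Dt_ne_of_not_collinear hangle
  rcases honeD.lt_or_gt with hneg | hpos
  · -- negative orientation: use basis (r, b', b)
    have ho : 0 < Dt r b' b := by rw [Dt_swap]; linarith
    have hcons' : ∀ x ∈ B, (x : ℂ) ∉ wedge r b' b := by
      intro x hx
      rw [wedge_comm]
      exact hconsec x hx
    have hOT : openTriangle r b b' = openTriangle r b' b := openTri_comm r b b'
    have htri1' : 1 ≤ ((↑R : Set ℂ) ∩ openTriangle r b' b).ncard := by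
      rw [← hOT]; exact htri1
    have htri2' : ((↑R : Set ℂ) ∩ openTriangle r b' b).ncard ≤ 2 := by
      rw [← hOT]; exact htri2
    obtain ⟨z, hA | hC⟩ := main_engineAC hdisj hgp hr hb' hb ho hcons' htri1' htri2'
    · exact ⟨z, b', quad_rot (quad_rot (quad_rot (quad_rev hA)))⟩
    · exact ⟨b', z, quad_rot (quad_rot (quad_rev hC))⟩
  · obtain ⟨z, hA | hB⟩ := main_engineAB hdisj hgp hr hb hb' hpos hconsec htri1 htri2
    · exact ⟨z, b', hA⟩
    · exact ⟨b', z, quad_rot (quad_rot (quad_rot hB))⟩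
end
end
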